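/- arXiv:1601.07872 — 7 statements merged into one kernel-verified Lean document; each statement's English description precedes it below -/
import Mathlib

section
/- Under assumptions (H1) and (H3), the functional p_h : L² → ℝ given by p_h(x) = E[K_h(‖X − x‖²_{L²})] is Fréchet differentiable at every x ∈ L², its L² gradient is Dp_h(x) = 2·E[K'_h(‖X − x‖²_{L²})·(x − X)], and sup_{x ∈ L²} ‖Dp_h(x)‖_{L²} ≤ 2K₁. -/
open MeasureTheory ProbabilityTheory Real Set Filter
open scoped InnerProductSpace ENNReal NNReal Topology

noncomputable section

/-- Lebesgue measure restricted to the unit interval `[0,1]`. -/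
def μ01 : Measure ℝ := volume.restrict (Set.Icc (0:ℝ) 1)

/-- The space `L²([0,1])`. -/
abbrev L2 : Type := Lp ℝ 2 μ01

/-- `x'` is a weak derivative of `x`, i.e. `x t = ∫₀ᵗ x'(s) ds` for a.e. `t ∈ [0,1]`. -/
def IsWeakDeriv (x' x : L2) : Prop :=
  ∀ᵐ t ∂μ01, x t = ∫ s in Set.Ioc (0:ℝ) t, x' s

/-- Membership in `H¹₀([0,1])`. -/
def MemH10 (x : L2) : Prop := ∃ x' : L2, IsWeakDeriv x' x

/-- The rescaled kernel `K_h(t) = K(t/h)`. -/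
def Kh (K : ℝ → ℝ) (h : ℝ) : ℝ → ℝ := fun t => K (t / h)

/-- Assumption (H1) on the kernel `K : [0,∞) → [0,∞)`. -/
structure AssumpH1 (K : ℝ → ℝ) (h K0 K1 K2 K3 : ℝ) : Prop where
  contDiff : ContDiff ℝ 3 K
  nonneg : ∀ t : ℝ, 0 ≤ t → 0 ≤ K t
  bound0 : ∀ t : ℝ, 0 ≤ t → |Kh K h (t ^ 2)| ≤ K0
  bound1 : ∀ t : ℝ, 0 ≤ t → |deriv (Kh K h) (t ^ 2) * t| ≤ K1
  bound2 : ∀ t : ℝ, 0 ≤ t →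
    |deriv (Kh K h) (t ^ 2)| + |iteratedDeriv 2 (Kh K h) (t ^ 2) * t ^ 2| ≤ K2
  bound3 : ∀ t : ℝ, 0 ≤ t →
    |iteratedDeriv 2 (Kh K h) (t ^ 2) * t| + |iteratedDeriv 3 (Kh K h) (t ^ 2) * t ^ 3| ≤ K3

/-- Assumption (H2) on the kernel: `K'(t²) + K(t²) ≤ 0` for all `t ≥ 0`. -/
def AssumpH2 (K : ℝ → ℝ) : Prop := ∀ t : ℝ, 0 ≤ t → deriv K (t ^ 2) + K (t ^ 2) ≤ 0

/-- The pseudo-density `p_h(x) = E_P K_h(‖X − x‖²_{L²})`. -/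
def pseudoDensity {Ω : Type*} [MeasurableSpace Ω] (P : Measure Ω) (X : Ω → L2)
    (K : ℝ → ℝ) (h : ℝ) (x : L2) : ℝ :=
  ∫ ω, Kh K h (‖X ω - x‖ ^ 2) ∂P

/-- The L² gradient `Dp_h(x) = 2 E_P [K'_h(‖X − x‖²)(x − X)]`. -/
def pseudoGrad {Ω : Type*} [MeasurableSpace Ω] (P : Measure Ω) (X : Ω → L2)
    (K : ℝ → ℝ) (h : ℝ) (x : L2) : L2 :=
  (2 : ℝ) • ∫ ω, deriv (Kh K h) (‖X ω - x‖ ^ 2) • (x - X ω) ∂P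

/-- Under (H1) and (H3), `p_h` is Fréchet differentiable at every `x ∈ L²`,
its L² gradient is `Dp_h(x) = 2 E[K'_h(‖X − x‖²)(x − X)]`, and `‖Dp_h(x)‖ ≤ 2K₁` for all `x`. -/
theorem statement0
    {Ω : Type*} [MeasurableSpace Ω] (P : Measure Ω) [IsProbabilityMeasure P]
    (X : Ω → L2) (K : ℝ → ℝ) (h K0 K1 K2 K3 M1 : ℝ) (hh : 0 < h)
    (hH1 : AssumpH1 K h K0 K1 K2 K3)
    (hXmeas : AEStronglyMeasurable X P)
    (hXint : Integrable (fun ω => ‖X ω‖) P)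
    (hM1 : (∫ ω, ‖X ω‖ ∂P) ≤ M1) :
    ∀ x : L2,
      HasGradientAt (pseudoDensity P X K h) (pseudoGrad P X K h x) x ∧
      ‖pseudoGrad P X K h x‖ ≤ 2 * K1 := by
  intro x
  -- notation
  set f := Kh K h with hfdef
  have hfC : ContDiff ℝ 3 f := hH1.contDiff.comp (contDiff_id.div_const h)
  have hfcont : Continuous f := hfC.continuous
  have hderivcont : Continuous (deriv f) := hfC.continuous_deriv (by norm_num)
  have hK1 : 0 ≤ K1 := le_trans (abs_nonneg _) (hH1.bound1 0 le_rfl)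
  -- the pointwise gradient integrand
  set G : L2 → L2 → L2 := fun y z => (2:ℝ) • deriv f (‖z - y‖ ^ 2) • (y - z) with hGdef
  have hGcont : ∀ y : L2, Continuous (fun z => G y z) := by
    intro y
    exact (continuous_const : Continuous fun _ : L2 => (2:ℝ)).smul
      ((hderivcont.comp (((continuous_id.sub continuous_const).norm).pow 2)).smul
        (continuous_const.sub (continuous_id (X := L2))))
  have hGbound : ∀ y z : L2, ‖G y z‖ ≤ 2 * K1 := by
    intro y z
    have ht : (0:ℝ) ≤ ‖z - y‖ := norm_nonneg _
    have hb := hH1.bound1 _ ht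
    have hyz : ‖y - z‖ = ‖z - y‖ := norm_sub_rev _ _
    have : ‖G y z‖ = 2 * |deriv f (‖z - y‖ ^ 2) * ‖z - y‖| := by
      simp [hGdef, norm_smul, Real.norm_eq_abs, abs_mul, hyz, abs_of_nonneg ht] <;> ring
    rw [this]
    have := hb
    nlinarith [abs_nonneg (deriv f (‖z - y‖ ^ 2) * ‖z - y‖)]
  -- the pointwise derivative
  have key : ∀ z y : L2, HasFDerivAt (fun y : L2 => f (‖z - y‖ ^ 2))
      ((InnerProductSpace.toDual ℝ L2) (G y z)) y := by
    intro z y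
    have h1 : HasFDerivAt (fun y : L2 => z - y) (-(ContinuousLinearMap.id ℝ L2)) y :=
      (hasFDerivAt_id y).const_sub z
    have h2 := h1.norm_sq
    have hd : HasDerivAt f (deriv f (‖z - y‖ ^ 2)) (‖z - y‖ ^ 2) :=
      ((hfC.differentiable (by norm_num)) _).hasDerivAt
    have h3 := hd.comp_hasFDerivAt y h2
    refine h3.congr_fderiv ?_
    ext w
    simp [hGdef, InnerProductSpace.toDual_apply_apply, inner_smul_left, real_inner_smul_left,
      inner_sub_left, ContinuousLinearMap.smul_apply, two_smul, inner_neg_right, real_inner_comm]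
  -- measurability
  have hFmeas : ∀ y : L2, AEStronglyMeasurable (fun ω => f (‖X ω - y‖ ^ 2)) P := by
    intro y
    exact (hfcont.comp (((continuous_id.sub continuous_const).norm).pow 2)).comp_aestronglyMeasurable
      hXmeas
  have hGmeas : AEStronglyMeasurable (fun ω => G x (X ω)) P :=
    (hGcont x).comp_aestronglyMeasurable hXmeas
  have hF'meas : AEStronglyMeasurable (fun ω => (InnerProductSpace.toDual ℝ L2) (G x (X ω))) P :=
    ((InnerProductSpace.toDual ℝ L2).continuous.comp (hGcont x)).comp_aestronglyMeasurable hXmeas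
  -- integrability
  have hGint : Integrable (fun ω => G x (X ω)) P :=
    (integrable_const (2 * K1)).mono' hGmeas (Eventually.of_forall fun ω => hGbound x (X ω))
  have hFint : Integrable (fun ω => f (‖X ω - x‖ ^ 2)) P := by
    refine (integrable_const K0).mono' (hFmeas x) (Eventually.of_forall fun ω => ?_)
    rw [Real.norm_eq_abs]
    exact hH1.bound0 _ (norm_nonneg _)
  have hF'int : Integrable (fun ω => (InnerProductSpace.toDual ℝ L2) (G x (X ω))) P := by
    refine (integrable_const (2 * K1)).mono' hF'meas (Eventually.of_forall fun ω => ?_)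
    rw [LinearIsometryEquiv.norm_map]
    exact hGbound x (X ω)
  -- differentiate under the integral sign
  have main : HasFDerivAt (fun y : L2 => ∫ ω, f (‖X ω - y‖ ^ 2) ∂P)
      (∫ ω, (InnerProductSpace.toDual ℝ L2) (G x (X ω)) ∂P) x := by
    refine hasFDerivAt_integral_of_dominated_of_fderiv_le (Metric.ball_mem_nhds x one_pos)
      (Eventually.of_forall fun y => hFmeas y) hFint hF'meas
      (Eventually.of_forall fun ω y _ => ?_) (integrable_const (2 * K1))
      (Eventually.of_forall fun ω y _ => key (X ω) y)
    rw [LinearIsometryEquiv.norm_map]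
    exact hGbound y (X ω)
  -- identify the gradient
  have hpg : pseudoGrad P X K h x = ∫ ω, G x (X ω) ∂P := by
    rw [pseudoGrad, hGdef, ← integral_smul]
  have hdual : (∫ ω, (InnerProductSpace.toDual ℝ L2) (G x (X ω)) ∂P)
      = (InnerProductSpace.toDual ℝ L2) (pseudoGrad P X K h x) := by
    ext w
    rw [ContinuousLinearMap.integral_apply hF'int]
    simp only [InnerProductSpace.toDual_apply_apply]
    rw [hpg]
    calc ∫ ω, ⟪G x (X ω), w⟫_ℝ ∂P = ∫ ω, ⟪w, G x (X ω)⟫_ℝ ∂P :=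
          integral_congr_ae (Eventually.of_forall fun ω => real_inner_comm _ _)
      _ = ⟪w, ∫ ω, G x (X ω) ∂P⟫_ℝ := integral_inner (𝕜 := ℝ) hGint w
      _ = ⟪∫ ω, G x (X ω) ∂P, w⟫_ℝ := real_inner_comm _ _
  constructor
  · rw [hasGradientAt_iff_hasFDerivAt, ← hdual]
    exact main
  · rw [hpg]
    calc ‖∫ ω, G x (X ω) ∂P‖ ≤ ∫ ω, (2 * K1) ∂P :=
          norm_integral_le_of_norm_le (integrable_const _)
            (Eventually.of_forall fun ω => hGbound x (X ω))
      _ = 2 * K1 := by simp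


end
end

section
/- Under assumptions (H1) and (H3), the functional p_h is twice Fréchet differentiable at every x ∈ L², its second Fréchet derivative is the symmetric bilinear form D²p_h(x)(z₁,z₂) = E[4·K''_h(‖X − x‖²_{L²})·⟨x − X, z₁⟩_{L²}·⟨x − X, z₂⟩_{L²} + 2·K'_h(‖X − x‖²_{L²})·⟨z₁,z₂⟩_{L²}] for z₁,z₂ ∈ L², and the operator norm of D²p_h(x) is bounded uniformly in x ∈ L² by a constant depending only on K₁ and K₂. -/
open MeasureTheory ProbabilityTheory Real Set Filter
open scoped InnerProductSpace ENNReal NNReal Topology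

noncomputable section
set_option maxHeartbeats 1000000
set_option synthInstance.maxHeartbeats 400000

namespace St1Aux

/-- The real inner product as a continuous bilinear map on `L2`. -/
def innerB : L2 →L[ℝ] (L2 →L[ℝ] ℝ) := innerSL ℝ

lemma norm_innerB_le : ‖innerB‖ ≤ 1 := norm_innerSL_le ℝ

variable (G : ℝ → ℝ)

/-- first-derivative kernel -/
def g1 (x v : L2) : L2 →L[ℝ] ℝ := (2 * deriv G (‖x - v‖ ^ 2)) • innerSL ℝ (x - v)

/-- second-derivative kernel -/
def g2 (x v : L2) : L2 →L[ℝ] (L2 →L[ℝ] ℝ) :=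
  (2 * deriv G (‖x - v‖ ^ 2)) • innerB +
    ((4 * iteratedDeriv 2 G (‖x - v‖ ^ 2)) • innerSL ℝ (x - v)).smulRight (innerSL ℝ (x - v))

lemma g2_apply (x v z₁ z₂ : L2) :
    g2 G x v z₁ z₂ = 4 * iteratedDeriv 2 G (‖x - v‖ ^ 2) * ⟪x - v, z₁⟫_ℝ * ⟪x - v, z₂⟫_ℝ
      + 2 * deriv G (‖x - v‖ ^ 2) * ⟪z₁, z₂⟫_ℝ := by
  simp only [g2, innerB, ContinuousLinearMap.add_apply, ContinuousLinearMap.smul_apply,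
    ContinuousLinearMap.smulRight_apply, innerSL_apply_apply, smul_eq_mul]
  have e : (innerSL ℝ z₁) z₂ = ⟪z₁, z₂⟫_ℝ := rfl
  rw [e]
  ring

lemma hasFDerivAt_normsq (v x : L2) :
    HasFDerivAt (fun y : L2 => ‖y - v‖ ^ 2) ((2:ℝ) • innerSL ℝ (x - v)) x := by
  have h := ((hasFDerivAt_id x).sub_const v).norm_sq
  simp only [id_eq] at h
  convert h using 1
  ext z
  rfl
  ext z
  simp [two_smul]

lemma hasFDerivAt_g0 (hG : Differentiable ℝ G) (v x : L2) :
    HasFDerivAt (fun y : L2 => G (‖y - v‖ ^ 2)) (g1 G x v) x := by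
  have h := (hG (‖x - v‖ ^ 2)).hasDerivAt.comp_hasFDerivAt x (hasFDerivAt_normsq v x)
  refine h.congr_fderiv ?_
  rw [smul_smul, mul_comm, g1]

lemma hasFDerivAt_g1 (hG' : Differentiable ℝ (deriv G)) (v x : L2) :
    HasFDerivAt (fun y : L2 => g1 G y v) (g2 G x v) x := by
  have hA : HasDerivAt (deriv G) (iteratedDeriv 2 G (‖x - v‖ ^ 2)) (‖x - v‖ ^ 2) := by
    rw [iteratedDeriv_succ, iteratedDeriv_one]
    exact (hG' _).hasDerivAt
  have hc := (hA.comp_hasFDerivAt x (hasFDerivAt_normsq v x)).const_mul (2:ℝ)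
  have hf : HasFDerivAt (fun y : L2 => innerSL ℝ (y - v)) innerB x :=
    ((innerB).hasFDerivAt.comp x ((hasFDerivAt_id x).sub_const v) :)
  have h := hc.smul hf
  refine h.congr_fderiv ?_
  ext z₁ z₂
  simp only [g2, innerB, ContinuousLinearMap.add_apply, ContinuousLinearMap.smul_apply,
    ContinuousLinearMap.smulRight_apply, ContinuousLinearMap.comp_apply,
    ContinuousLinearMap.coe_id', id_eq, innerSL_apply_apply, smul_eq_mul, Function.comp_apply]
  ring

lemma norm_g1_le {K1 : ℝ} (hb : ∀ t : ℝ, 0 ≤ t → |deriv G (t ^ 2) * t| ≤ K1) (x v : L2) :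
    ‖g1 G x v‖ ≤ 2 * K1 := by
  have h := hb ‖x - v‖ (norm_nonneg _)
  rw [abs_mul, abs_of_nonneg (norm_nonneg _)] at h
  rw [g1, norm_smul (2 * deriv G (‖x - v‖ ^ 2)) ((innerSL ℝ) (x - v)), innerSL_apply_norm,
    Real.norm_eq_abs, abs_mul, abs_two, mul_assoc]
  linarith

lemma norm_g2_le {K2 : ℝ}
    (hb : ∀ t : ℝ, 0 ≤ t → |deriv G (t ^ 2)| + |iteratedDeriv 2 G (t ^ 2) * t ^ 2| ≤ K2)
    (x v : L2) : ‖g2 G x v‖ ≤ 4 * K2 := by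
  have h := hb ‖x - v‖ (norm_nonneg _)
  rw [abs_mul, abs_of_nonneg (by positivity : (0:ℝ) ≤ ‖x - v‖ ^ 2)] at h
  haveI : NormSMulClass ℝ (L2 →L[ℝ] (L2 →L[ℝ] ℝ)) := @NormedSpace.toNormSMulClass ℝ (L2 →L[ℝ] (L2 →L[ℝ] ℝ)) _ _ _
  have h1 : ‖(2 * deriv G (‖x - v‖ ^ 2)) • innerB‖ ≤ 2 * |deriv G (‖x - v‖ ^ 2)| := by
    rw [norm_smul (2 * deriv G (‖x - v‖ ^ 2)) innerB, Real.norm_eq_abs, abs_mul, abs_two]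
    calc 2 * |deriv G (‖x - v‖ ^ 2)| * ‖innerB‖
        ≤ 2 * |deriv G (‖x - v‖ ^ 2)| * 1 :=
          mul_le_mul_of_nonneg_left norm_innerB_le (by positivity)
      _ = 2 * |deriv G (‖x - v‖ ^ 2)| := by ring
  have h2 : ‖(((4 * iteratedDeriv 2 G (‖x - v‖ ^ 2)) • innerSL ℝ (x - v)).smulRight
      (innerSL ℝ (x - v)))‖ = 4 * |iteratedDeriv 2 G (‖x - v‖ ^ 2)| * ‖x - v‖ ^ 2 := by
    rw [ContinuousLinearMap.norm_smulRight_apply,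
      norm_smul (4 * iteratedDeriv 2 G (‖x - v‖ ^ 2)) ((innerSL ℝ) (x - v)),
      Real.norm_eq_abs, abs_mul, innerSL_apply_norm,
      (by norm_num : |(4:ℝ)| = 4)]
    ring
  have h3 : ‖g2 G x v‖ ≤ 2 * |deriv G (‖x - v‖ ^ 2)| +
      4 * |iteratedDeriv 2 G (‖x - v‖ ^ 2)| * ‖x - v‖ ^ 2 := by
    rw [g2]
    refine (norm_add_le ((2 * deriv G (‖x - v‖ ^ 2)) • innerB)
      (((4 * iteratedDeriv 2 G (‖x - v‖ ^ 2)) • innerSL ℝ (x - v)).smulRight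
        (innerSL ℝ (x - v)))).trans ?_
    rw [h2]
    exact add_le_add_left h1 _
  have h5 : (0:ℝ) ≤ |deriv G (‖x - v‖ ^ 2)| := abs_nonneg _
  linarith

lemma cont_g1 (hG' : Continuous (deriv G)) (x : L2) : Continuous (g1 G x) := by
  have hq : Continuous fun v : L2 => ‖x - v‖ ^ 2 :=
    ((continuous_const.sub continuous_id).norm.pow 2)
  exact (continuous_const.mul (hG'.comp hq)).smul
    ((innerSL ℝ).continuous.comp (continuous_const.sub continuous_id))

lemma cont_g2 (hG' : Continuous (deriv G)) (hG'' : Continuous (iteratedDeriv 2 G)) (x : L2) :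
    Continuous (g2 G x) := by
  have hq : Continuous fun v : L2 => ‖x - v‖ ^ 2 :=
    ((continuous_const.sub continuous_id).norm.pow 2)
  have hbc : Continuous fun v : L2 => innerSL ℝ (x - v) :=
    (innerSL ℝ).continuous.comp (continuous_const.sub continuous_id)
  have hc : Continuous fun v : L2 => (4 * iteratedDeriv 2 G (‖x - v‖ ^ 2)) • innerSL ℝ (x - v) :=
    (continuous_const.mul (hG''.comp hq)).smul hbc
  exact ((continuous_const.mul (hG'.comp hq)).smul continuous_const).add
    ((isBoundedBilinearMap_smulRight :
      IsBoundedBilinearMap ℝ fun p : (L2 →L[ℝ] ℝ) × (L2 →L[ℝ] ℝ) => p.1.smulRight p.2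
      ).continuous.comp (hc.prodMk hbc))

end St1Aux

/-- Under (H1) and (H3), `p_h` is twice Fréchet differentiable at every
`x ∈ L²`, its second Fréchet derivative is the symmetric bilinear form
`D²p_h(x)(z₁,z₂) = E[4 K''_h(‖X−x‖²) ⟨x−X,z₁⟩ ⟨x−X,z₂⟩ + 2 K'_h(‖X−x‖²) ⟨z₁,z₂⟩]`,
and its operator norm is bounded uniformly in `x` by a constant depending only on
`K₁` and `K₂` (namely by `4K₂`). -/
theorem statement1
    {Ω : Type*} [MeasurableSpace Ω] (P : Measure Ω) [IsProbabilityMeasure P]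
    (X : Ω → L2) (K : ℝ → ℝ) (h K0 K1 K2 K3 M1 : ℝ) (hh : 0 < h)
    (hH1 : AssumpH1 K h K0 K1 K2 K3)
    (hXmeas : AEStronglyMeasurable X P)
    (hXint : Integrable (fun ω => ‖X ω‖) P)
    (hM1 : (∫ ω, ‖X ω‖ ∂P) ≤ M1) :
    ∃ (D1 : L2 → (L2 →L[ℝ] ℝ)) (D2 : L2 → (L2 →L[ℝ] (L2 →L[ℝ] ℝ))),
      ∀ x : L2,
        HasFDerivAt (pseudoDensity P X K h) (D1 x) x ∧
        HasFDerivAt D1 (D2 x) x ∧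
        (∀ z₁ z₂ : L2, D2 x z₁ z₂ =
          ∫ ω, (4 * iteratedDeriv 2 (Kh K h) (‖X ω - x‖ ^ 2) * ⟪x - X ω, z₁⟫_ℝ * ⟪x - X ω, z₂⟫_ℝ
            + 2 * deriv (Kh K h) (‖X ω - x‖ ^ 2) * ⟪z₁, z₂⟫_ℝ) ∂P) ∧
        (∀ z₁ z₂ : L2, D2 x z₁ z₂ = D2 x z₂ z₁) ∧
        ‖D2 x‖ ≤ 4 * K2 := by
  have hG : ContDiff ℝ 3 (Kh K h) := hH1.contDiff.comp (contDiff_id.div_const h)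
  have hGdiff : Differentiable ℝ (Kh K h) := hG.differentiable (by norm_num)
  have hG2 : ContDiff ℝ 2 (deriv (Kh K h)) := by
    have h3 : ContDiff ℝ ((2 : ℕ∞) + 1) (Kh K h) := by exact_mod_cast hG
    exact (contDiff_succ_iff_deriv.mp h3).2.2
  have hG'diff : Differentiable ℝ (deriv (Kh K h)) := hG2.differentiable (by norm_num)
  have hG'cont : Continuous (deriv (Kh K h)) := hG2.continuous
  have hG''cont : Continuous (iteratedDeriv 2 (Kh K h)) := by
    rw [iteratedDeriv_succ, iteratedDeriv_one]
    have h2 : ContDiff ℝ ((1 : ℕ∞) + 1) (deriv (Kh K h)) := by exact_mod_cast hG2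
    exact ((contDiff_succ_iff_deriv.mp h2).2.2).continuous
  have hmeas1 : ∀ x : L2, AEStronglyMeasurable (fun ω => St1Aux.g1 (Kh K h) x (X ω)) P :=
    fun x => (St1Aux.cont_g1 _ hG'cont x).comp_aestronglyMeasurable hXmeas
  have hmeas2 : ∀ x : L2, AEStronglyMeasurable (fun ω => St1Aux.g2 (Kh K h) x (X ω)) P :=
    fun x => (St1Aux.cont_g2 _ hG'cont hG''cont x).comp_aestronglyMeasurable hXmeas
  have hint1 : ∀ x : L2, Integrable (fun ω => St1Aux.g1 (Kh K h) x (X ω)) P := fun x =>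
    (integrable_const (2 * K1)).mono' (hmeas1 x)
      (ae_of_all _ fun ω => St1Aux.norm_g1_le _ hH1.bound1 x (X ω))
  have hint2 : ∀ x : L2, @Integrable (L2 →L[ℝ] L2 →L[ℝ] ℝ) _ SeminormedAddGroup.toContinuousENorm _ _ (fun ω => St1Aux.g2 (Kh K h) x (X ω)) P := fun x =>
    (integrable_const (4 * K2)).mono' (β := L2 →L[ℝ] L2 →L[ℝ] ℝ) (hmeas2 x)
      (ae_of_all _ fun ω => St1Aux.norm_g2_le _ hH1.bound2 x (X ω))
  refine ⟨fun x => ∫ ω, St1Aux.g1 (Kh K h) x (X ω) ∂P,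
    fun x => ∫ ω, St1Aux.g2 (Kh K h) x (X ω) ∂P, fun x => ?_⟩
  have hform : ∀ z₁ z₂ : L2, (∫ ω, St1Aux.g2 (Kh K h) x (X ω) ∂P) z₁ z₂ =
      ∫ ω, (4 * iteratedDeriv 2 (Kh K h) (‖X ω - x‖ ^ 2) * ⟪x - X ω, z₁⟫_ℝ * ⟪x - X ω, z₂⟫_ℝ
        + 2 * deriv (Kh K h) (‖X ω - x‖ ^ 2) * ⟪z₁, z₂⟫_ℝ) ∂P := by
    intro z₁ z₂
    rw [ContinuousLinearMap.integral_apply (hint2 x) z₁,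
      ContinuousLinearMap.integral_apply ((hint2 x).apply_continuousLinearMap z₁) z₂]
    refine integral_congr_ae (ae_of_all _ fun ω => ?_)
    simp only [St1Aux.g2_apply, norm_sub_rev (X ω) x]
  refine ⟨?_, ?_, hform, ?_, ?_⟩
  · -- first derivative
    have hfun : pseudoDensity P X K h = fun y => ∫ ω, Kh K h (‖y - X ω‖ ^ 2) ∂P := by
      funext y
      exact integral_congr_ae (ae_of_all _ fun ω => by simp only [norm_sub_rev (X ω) y])
    rw [hfun]
    refine hasFDerivAt_integral_of_dominated_of_fderiv_le (s := Metric.ball x 1)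
      (F := fun x' ω => Kh K h (‖x' - X ω‖ ^ 2))
      (F' := fun x' ω => St1Aux.g1 (Kh K h) x' (X ω))
      (bound := fun _ => 2 * K1) (Metric.ball_mem_nhds x one_pos) ?_ ?_ (hmeas1 x) ?_ (integrable_const _) ?_
    · exact Eventually.of_forall fun x' =>
        (hG.continuous.comp ((continuous_const.sub continuous_id).norm.pow 2)
          ).comp_aestronglyMeasurable hXmeas
    · refine (integrable_const K0).mono'
        ((hG.continuous.comp ((continuous_const.sub continuous_id).norm.pow 2)
          ).comp_aestronglyMeasurable hXmeas) (ae_of_all _ fun ω => ?_)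
      simpa using hH1.bound0 ‖x - X ω‖ (norm_nonneg _)
    · exact ae_of_all _ fun ω x' _ => St1Aux.norm_g1_le _ hH1.bound1 x' (X ω)
    · exact ae_of_all _ fun ω x' _ => St1Aux.hasFDerivAt_g0 _ hGdiff (X ω) x'
  · -- second derivative
    refine hasFDerivAt_integral_of_dominated_of_fderiv_le (s := Metric.ball x 1)
      (F := fun x' ω => St1Aux.g1 (Kh K h) x' (X ω))
      (F' := fun x' ω => St1Aux.g2 (Kh K h) x' (X ω))
      (bound := fun _ => 4 * K2) (Metric.ball_mem_nhds x one_pos) ?_ (hint1 x) (hmeas2 x) ?_ (integrable_const _) ?_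
    · exact Eventually.of_forall fun x' => hmeas1 x'
    · exact ae_of_all _ fun ω x' _ => St1Aux.norm_g2_le _ hH1.bound2 x' (X ω)
    · exact ae_of_all _ fun ω x' _ => St1Aux.hasFDerivAt_g1 _ hG'diff (X ω) x'
  · -- symmetry
    intro z₁ z₂
    rw [hform z₁ z₂, hform z₂ z₁]
    refine integral_congr_ae (ae_of_all _ fun ω => ?_)
    rw [real_inner_comm z₂ z₁]
    ring
  · -- norm bound
    refine (norm_integral_le_of_norm_le (integrable_const (4 * K2))
      (ae_of_all _ fun ω => St1Aux.norm_g2_le _ hH1.bound2 x (X ω))).trans ?_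
    simp

end
end

section
/- Under assumptions (H1) and (H3), for every x ∈ H¹₀ the L² gradient Dp_h(x) is itself an element of H¹₀, its weak derivative satisfies ⟨(Dp_h(x))', y⟩_{L²} = 2·E[K'_h(‖X − x‖²_{L²})·⟨x' − X', y⟩_{L²}] for every y ∈ L², and ‖Dp_h(x)‖_{H¹₀} ≤ 2K₂(‖x‖_{H¹₀} + N₁). -/
open MeasureTheory ProbabilityTheory Real Set Filter
open scoped InnerProductSpace ENNReal NNReal Topology

noncomputable section

instance : IsProbabilityMeasure μ01 :=
  ⟨by simp [μ01, Real.volume_Icc]⟩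

/-- The truncated primitive. -/
def Vfun (f : ℝ → ℝ) : ℝ → ℝ :=
  fun t => ∫ s in (0:ℝ)..t, (Set.Icc (0:ℝ) 1).indicator f s

lemma integrable_μ01 (f : L2) : Integrable (⇑f) μ01 :=
  (Lp.memLp f).integrable one_le_two

lemma integrable_ind (f : L2) :
    Integrable ((Set.Icc (0:ℝ) 1).indicator ⇑f) volume := by
  rw [integrable_indicator_iff measurableSet_Icc]
  exact integrable_μ01 f

lemma l1_le_l2 (f : L2) : ∫ s, ‖f s‖ ∂μ01 ≤ ‖f‖ := by
  rw [integral_norm_eq_lintegral_enorm (Lp.aestronglyMeasurable f), Lp.norm_def]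
  rw [← eLpNorm_one_eq_lintegral_enorm]
  exact ENNReal.toReal_mono (Lp.eLpNorm_ne_top f)
    (eLpNorm_le_eLpNorm_of_exponent_le one_le_two (Lp.aestronglyMeasurable f))

lemma Vfun_bound (f : L2) (t : ℝ) : ‖Vfun f t‖ ≤ ‖f‖ := by
  have h1 : ‖Vfun f t‖ ≤ ∫ s in Set.uIoc (0:ℝ) t, ‖(Set.Icc (0:ℝ) 1).indicator ⇑f s‖ :=
    intervalIntegral.norm_integral_le_integral_norm_uIoc
  have h2 : ∫ s in Set.uIoc (0:ℝ) t, ‖(Set.Icc (0:ℝ) 1).indicator ⇑f s‖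
      ≤ ∫ s, ‖(Set.Icc (0:ℝ) 1).indicator ⇑f s‖ ∂volume := by
    apply integral_mono_measure Measure.restrict_le_self
    · exact Eventually.of_forall fun s => norm_nonneg _
    · exact (integrable_ind f).norm
  have h3 : ∫ s, ‖(Set.Icc (0:ℝ) 1).indicator ⇑f s‖ ∂volume = ∫ s, ‖f s‖ ∂μ01 := by
    simp_rw [norm_indicator_eq_indicator_norm]
    rw [integral_indicator measurableSet_Icc]
    rfl
  calc ‖Vfun f t‖ ≤ _ := h1
    _ ≤ _ := h2
    _ = _ := h3
    _ ≤ ‖f‖ := l1_le_l2 f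

lemma Vfun_continuous (f : L2) : Continuous (Vfun f) :=
  intervalIntegral.continuous_primitive
    (fun _ _ => (integrable_ind f).intervalIntegrable) 0

lemma Vfun_memℒp (f : L2) : MemLp (Vfun f) 2 μ01 :=
  MemLp.of_bound ((Vfun_continuous f).stronglyMeasurable.aestronglyMeasurable) ‖f‖
    (Eventually.of_forall (Vfun_bound f))

/-- The Volterra operator as a map `L2 → L2`. -/
def Vmap (f : L2) : L2 := (Vfun_memℒp f).toLp (Vfun f)

lemma Vmap_coeFn (f : L2) : ⇑(Vmap f) =ᵐ[μ01] Vfun f := MemLp.coeFn_toLp _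

lemma Vmap_norm_le (f : L2) : ‖Vmap f‖ ≤ ‖f‖ := by
  rw [Vmap, Lp.norm_toLp]
  have := eLpNorm_le_of_ae_bound (μ := μ01) (p := 2) (f := Vfun f)
    (C := ‖f‖) (Eventually.of_forall (Vfun_bound f))
  rw [measure_univ, ENNReal.one_rpow, one_mul] at this
  calc (eLpNorm (Vfun f) 2 μ01).toReal ≤ (ENNReal.ofReal ‖f‖).toReal :=
        ENNReal.toReal_mono ENNReal.ofReal_ne_top this
    _ = ‖f‖ := ENNReal.toReal_ofReal (norm_nonneg f)

lemma Vfun_eq_ae (f : L2) :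
    ∀ᵐ t ∂μ01, Vfun f t = ∫ s in Set.Ioc (0:ℝ) t, f s := by
  have ht : ∀ᵐ t ∂μ01, t ∈ Set.Icc (0:ℝ) 1 :=
    ae_restrict_mem measurableSet_Icc
  filter_upwards [ht] with t ht
  rw [Vfun, intervalIntegral.integral_of_le ht.1,
    setIntegral_indicator measurableSet_Icc,
    Set.inter_eq_left.mpr (fun s hs => Set.mem_Icc.mpr ⟨le_of_lt hs.1, hs.2.trans ht.2⟩)]

lemma isWeakDeriv_iff (f g : L2) : IsWeakDeriv f g ↔ g = Vmap f := by
  constructor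
  · intro H
    apply Lp.ext
    filter_upwards [H, Vmap_coeFn f, Vfun_eq_ae f] with t h1 h2 h3
    rw [h1, h2, h3]
  · rintro rfl
    filter_upwards [Vmap_coeFn f, Vfun_eq_ae f] with t h2 h3
    rw [h2, h3]

lemma Vfun_congr {f g : ℝ → ℝ} (h : f =ᵐ[μ01] g) : ∀ t, Vfun f t = Vfun g t := by
  intro t
  have h' : ∀ᵐ s ∂(volume : Measure ℝ), s ∈ Set.Icc (0:ℝ) 1 → f s = g s :=
    (ae_restrict_iff' measurableSet_Icc).mp h
  have hind : (Set.Icc (0:ℝ) 1).indicator f =ᵐ[volume] (Set.Icc (0:ℝ) 1).indicator g := by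
    filter_upwards [h'] with s hs
    by_cases hmem : s ∈ Set.Icc (0:ℝ) 1
    · simp [Set.indicator_of_mem hmem, hs hmem]
    · simp [Set.indicator_of_notMem hmem]
  exact intervalIntegral.integral_congr_ae (hind.mono fun s hs _ => hs)

lemma indicator_add_fun (f g : ℝ → ℝ) :
    (Set.Icc (0:ℝ) 1).indicator (f + g)
      = fun s => (Set.Icc (0:ℝ) 1).indicator f s + (Set.Icc (0:ℝ) 1).indicator g s := by
  funext s
  by_cases hmem : s ∈ Set.Icc (0:ℝ) 1
  · simp [Set.indicator_of_mem hmem]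
  · simp [Set.indicator_of_notMem hmem]

lemma indicator_smul_fun (c : ℝ) (f : ℝ → ℝ) :
    (Set.Icc (0:ℝ) 1).indicator (c • f)
      = fun s => c * (Set.Icc (0:ℝ) 1).indicator f s := by
  funext s
  by_cases hmem : s ∈ Set.Icc (0:ℝ) 1
  · simp [Set.indicator_of_mem hmem]
  · simp [Set.indicator_of_notMem hmem]

lemma Vmap_add (f g : L2) : Vmap (f + g) = Vmap f + Vmap g := by
  apply Lp.ext
  have h1 : ∀ t, Vfun ⇑(f + g) t = Vfun ⇑f t + Vfun ⇑g t := by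
    intro t
    rw [Vfun_congr (Lp.coeFn_add f g) t]
    unfold Vfun
    rw [indicator_add_fun]
    exact intervalIntegral.integral_add (integrable_ind f).intervalIntegrable
      (integrable_ind g).intervalIntegrable
  filter_upwards [Vmap_coeFn (f + g), Lp.coeFn_add (Vmap f) (Vmap g),
    Vmap_coeFn f, Vmap_coeFn g] with t e1 e2 e3 e4
  rw [e1, e2, h1 t]
  simp [e3, e4]

lemma Vmap_smul (c : ℝ) (f : L2) : Vmap (c • f) = c • Vmap f := by
  apply Lp.ext
  have h1 : ∀ t, Vfun ⇑(c • f) t = c * Vfun ⇑f t := by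
    intro t
    rw [Vfun_congr (Lp.coeFn_smul c f) t]
    unfold Vfun
    rw [indicator_smul_fun]
    exact intervalIntegral.integral_const_mul c _
  filter_upwards [Vmap_coeFn (c • f), Lp.coeFn_smul c (Vmap f), Vmap_coeFn f]
    with t e1 e2 e3
  rw [e1, e2, h1 t]
  simp [e3]

/-- The Volterra operator as a continuous linear map. -/
def Vclm : L2 →L[ℝ] L2 :=
  LinearMap.mkContinuous
    { toFun := Vmap, map_add' := Vmap_add, map_smul' := Vmap_smul } 1
    (fun f => by simpa using Vmap_norm_le f)

lemma isWeakDeriv_iff' (f g : L2) : IsWeakDeriv f g ↔ g = Vclm f := isWeakDeriv_iff f g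


/-- Under (H1) and (H3), for every `x ∈ H¹₀` the L² gradient `Dp_h(x)`
is itself an element of `H¹₀`, its weak derivative `g'` satisfies
`⟨g', y⟩_{L²} = 2 E[K'_h(‖X − x‖²) ⟨x' − X', y⟩_{L²}]` for every `y ∈ L²`, and
`‖Dp_h(x)‖_{H¹₀} ≤ 2K₂(‖x‖_{H¹₀} + N₁)`. -/
theorem statement2
    {Ω : Type*} [MeasurableSpace Ω] (P : Measure Ω) [IsProbabilityMeasure P]
    (X X' : Ω → L2) (K : ℝ → ℝ) (h K0 K1 K2 K3 M1 N1 : ℝ) (hh : 0 < h)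
    (hH1 : AssumpH1 K h K0 K1 K2 K3)
    (hXmeas : AEStronglyMeasurable X P) (hX'meas : AEStronglyMeasurable X' P)
    (hXH10 : ∀ᵐ ω ∂P, IsWeakDeriv (X' ω) (X ω))
    (hXint : Integrable (fun ω => ‖X ω‖) P) (hX'int : Integrable (fun ω => ‖X' ω‖) P)
    (hM1 : (∫ ω, ‖X ω‖ ∂P) ≤ M1) (hN1 : (∫ ω, ‖X' ω‖ ∂P) ≤ N1)
    (x x' : L2) (hx : IsWeakDeriv x' x) :
    ∃ g' : L2,
      IsWeakDeriv g' (pseudoGrad P X K h x) ∧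
      (∀ y : L2, ⟪g', y⟫_ℝ =
        2 * ∫ ω, deriv (Kh K h) (‖X ω - x‖ ^ 2) * ⟪x' - X' ω, y⟫_ℝ ∂P) ∧
      ‖g'‖ ≤ 2 * K2 * (‖x'‖ + N1) := by
  set c : Ω → ℝ := fun ω => deriv (Kh K h) (‖X ω - x‖ ^ 2) with hc
  have hK2 : ∀ ω, |c ω| ≤ K2 := by
    intro ω
    have h1 := hH1.bound2 ‖X ω - x‖ (norm_nonneg _)
    have h2 : (0:ℝ) ≤ |iteratedDeriv 2 (Kh K h) (‖X ω - x‖ ^ 2) * ‖X ω - x‖ ^ 2| :=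
      abs_nonneg _
    simp only [hc]
    linarith
  have hK2nonneg : 0 ≤ K2 := by
    have h1 := hH1.bound2 0 le_rfl
    have h2 : (0:ℝ) ≤ |deriv (Kh K h) ((0:ℝ) ^ 2)| := abs_nonneg _
    have h3 : (0:ℝ) ≤ |iteratedDeriv 2 (Kh K h) ((0:ℝ) ^ 2) * (0:ℝ) ^ 2| := abs_nonneg _
    linarith
  have hKh : ContDiff ℝ 3 (Kh K h) := hH1.contDiff.comp (contDiff_id.div_const h)
  have hderivCont : Continuous (deriv (Kh K h)) := hKh.continuous_deriv (by norm_num)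
  have hcmeas : AEStronglyMeasurable c P := by
    exact hderivCont.comp_aestronglyMeasurable
      ((continuous_pow 2).comp_aestronglyMeasurable
        (hXmeas.sub aestronglyMeasurable_const).norm)
  set F' : Ω → L2 := fun ω => c ω • (x' - X' ω) with hF'
  set F : Ω → L2 := fun ω => c ω • (x - X ω) with hF
  have hF'meas : AEStronglyMeasurable F' P :=
    hcmeas.smul (aestronglyMeasurable_const.sub hX'meas)
  have hFmeas : AEStronglyMeasurable F P :=
    hcmeas.smul (aestronglyMeasurable_const.sub hXmeas)
  have hbound' : ∀ ω, ‖F' ω‖ ≤ K2 * (‖x'‖ + ‖X' ω‖) := by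
    intro ω
    rw [hF']
    simp only
    rw [norm_smul, Real.norm_eq_abs]
    exact mul_le_mul (hK2 ω) (norm_sub_le _ _) (norm_nonneg _) hK2nonneg
  have hbound : ∀ ω, ‖F ω‖ ≤ K2 * (‖x‖ + ‖X ω‖) := by
    intro ω
    rw [hF]
    simp only
    rw [norm_smul, Real.norm_eq_abs]
    exact mul_le_mul (hK2 ω) (norm_sub_le _ _) (norm_nonneg _) hK2nonneg
  have hgint' : Integrable (fun ω => K2 * (‖x'‖ + ‖X' ω‖)) P :=
    ((integrable_const ‖x'‖).add hX'int).const_mul K2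
  have hgint : Integrable (fun ω => K2 * (‖x‖ + ‖X ω‖)) P :=
    ((integrable_const ‖x‖).add hXint).const_mul K2
  have hF'int : Integrable F' P :=
    Integrable.mono' hgint' hF'meas (Eventually.of_forall hbound')
  have hFint : Integrable F P :=
    Integrable.mono' hgint hFmeas (Eventually.of_forall hbound)
  set I : L2 := ∫ ω, F' ω ∂P with hI
  refine ⟨(2:ℝ) • I, ?_, ?_, ?_⟩
  · -- weak derivative
    rw [isWeakDeriv_iff']
    have hxV : x = Vclm x' := (isWeakDeriv_iff' x' x).mp hx
    have hXV : ∀ᵐ ω ∂P, X ω = Vclm (X' ω) := by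
      filter_upwards [hXH10] with ω hω
      exact (isWeakDeriv_iff' (X' ω) (X ω)).mp hω
    have step1 : Vclm ((2:ℝ) • I) = (2:ℝ) • Vclm I := map_smul Vclm 2 I
    have step2 : Vclm I = ∫ ω, Vclm (F' ω) ∂P :=
      (ContinuousLinearMap.integral_comp_comm Vclm hF'int).symm
    have step3 : ∫ ω, Vclm (F' ω) ∂P = ∫ ω, F ω ∂P := by
      apply integral_congr_ae
      filter_upwards [hXV] with ω hω
      rw [hF', hF]
      simp only
      rw [_root_.map_smul, map_sub, ← hxV, ← hω]
    rw [step1, step2, step3]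
    rfl
  · -- inner product identity
    intro y
    rw [real_inner_smul_left]
    congr 1
    rw [real_inner_comm, hI, ← integral_inner hF'int y]
    apply integral_congr_ae
    apply Eventually.of_forall
    intro ω
    rw [hF']
    simp only
    rw [inner_smul_right, real_inner_comm]
  · -- norm bound
    have h1 : ‖(2:ℝ) • I‖ = 2 * ‖I‖ := by
      rw [norm_smul, Real.norm_eq_abs]
      norm_num
    rw [h1]
    have h2 : ‖I‖ ≤ ∫ ω, ‖F' ω‖ ∂P := norm_integral_le_integral_norm _
    have h3 : ∫ ω, ‖F' ω‖ ∂P ≤ ∫ ω, K2 * (‖x'‖ + ‖X' ω‖) ∂P :=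
      integral_mono hF'int.norm hgint' hbound'
    have h4 : ∫ ω, K2 * (‖x'‖ + ‖X' ω‖) ∂P = K2 * (‖x'‖ + ∫ ω, ‖X' ω‖ ∂P) := by
      rw [integral_const_mul, integral_add (integrable_const _) hX'int,
        integral_const]
      simp
    have h5 : K2 * (‖x'‖ + ∫ ω, ‖X' ω‖ ∂P) ≤ K2 * (‖x'‖ + N1) :=
      mul_le_mul_of_nonneg_left (add_le_add_right hN1 _) hK2nonneg
    calc 2 * ‖I‖ ≤ 2 * (K2 * (‖x'‖ + N1)) := by
          have := le_trans h2 (le_trans h3 (le_of_eq h4 |>.trans h5))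
          linarith
      _ = 2 * K2 * (‖x'‖ + N1) := by ring

end
end

section
/- Assume (H1) and (H2), let S be a finite-dimensional linear subspace of L², let S_c ⊂ S be compact, and assume P(X ∈ S_c) = 1. Then: (i) for every x ∈ S one has Dp_h(x) ∈ S, and consequently any solution π of the gradient-flow initial value problem π'(t) = Dp_h(π(t)) with π(0) ∈ S satisfies π(t) ∈ S for all t ≥ 0; (ii) every nontrivial critical point of p_h (a point x with Dp_h(x) = 0 and p_h(x) > 0) belongs to S. -/
open MeasureTheory ProbabilityTheory Real Set Filter
open scoped InnerProductSpace ENNReal NNReal Topology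

noncomputable section

-- auxiliary lemmas
lemma aux_deriv_Kh {K : ℝ → ℝ} {h : ℝ} (hK : ContDiff ℝ 3 K) (hh : 0 < h) (u : ℝ) :
    deriv (Kh K h) u = deriv K (u / h) / h := by
  have h1 : HasDerivAt (fun t : ℝ => t / h) (1 / h) u := by
    simpa using (hasDerivAt_id u).div_const h
  have h2 : HasDerivAt K (deriv K (u / h)) (u / h) :=
    ((hK.differentiable (by norm_num)) (u / h)).hasDerivAt
  have h3 : HasDerivAt (Kh K h) (deriv K (u / h) * (1 / h)) u := h2.comp u h1
  rw [h3.deriv]; ring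

lemma aux_cont_deriv_Kh {K : ℝ → ℝ} {h : ℝ} (hK : ContDiff ℝ 3 K) (hh : 0 < h) :
    Continuous (deriv (Kh K h)) := by
  have h1 : deriv (Kh K h) = fun u => deriv K (u / h) / h := funext (aux_deriv_Kh hK hh)
  rw [h1]
  exact ((hK.continuous_deriv (by norm_num)).comp (continuous_id.div_const h)).div_const h

lemma aux_diff_Kh {K : ℝ → ℝ} {h : ℝ} (hK : ContDiff ℝ 3 K) :
    Differentiable ℝ (Kh K h) := by
  have : ContDiff ℝ 3 (Kh K h) := hK.comp (contDiff_id.div_const h)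
  exact this.differentiable (by norm_num)

lemma key_ineq
    {Ω : Type*} [MeasurableSpace Ω] (P : Measure Ω) [IsProbabilityMeasure P]
    (X : Ω → L2) (K : ℝ → ℝ) (h K0 K1 K2 K3 : ℝ) (hh : 0 < h)
    (hH1 : AssumpH1 K h K0 K1 K2 K3) (hH2 : AssumpH2 K)
    (hXmeas : AEStronglyMeasurable X P)
    (S : Submodule ℝ L2) [S.HasOrthogonalProjection]
    (hXS : ∀ᵐ ω ∂P, X ω ∈ S)
    (G : L2 → L2) (hG : ∀ y, HasGradientAt (pseudoDensity P X K h) (G y) y)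
    (y : L2) :
    ⟪G y, y - (Submodule.orthogonalProjection S y : L2)⟫_ℝ ≤
      -(2 * ‖y - (Submodule.orthogonalProjection S y : L2)‖ ^ 2 / h) * pseudoDensity P X K h y := by
  set s : L2 := (Submodule.orthogonalProjection S y : L2) with hs
  set v : L2 := y - s with hvdef
  have hvmem : v ∈ Sᗮ := Submodule.sub_starProjection_mem_orthogonal y
  have hKd := hH1.contDiff
  have hKhdiff : Differentiable ℝ (Kh K h) := aux_diff_Kh hKd
  have hcontKh : Continuous (Kh K h) := hKhdiff.continuous
  have hcontd : Continuous (deriv (Kh K h)) := aux_cont_deriv_Kh hKd hh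
  have hb0 : ∀ r : ℝ, 0 ≤ r → |Kh K h (r ^ 2)| ≤ K0 := hH1.bound0
  have hb2 : ∀ u : ℝ, 0 ≤ u → |deriv (Kh K h) u| ≤ K2 := by
    intro u hu
    have h1 := hH1.bound2 (Real.sqrt u) (Real.sqrt_nonneg u)
    rw [Real.sq_sqrt hu] at h1
    have h2 := abs_nonneg (iteratedDeriv 2 (Kh K h) u * Real.sqrt u ^ 2)
    rw [Real.sq_sqrt hu] at h2
    linarith
  have hmSq : ∀ c : L2, AEStronglyMeasurable (fun ω => ‖X ω - c‖ ^ 2) P := fun c =>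
    (continuous_pow 2).comp_aestronglyMeasurable (hXmeas.sub aestronglyMeasurable_const).norm
  set F : ℝ → Ω → ℝ := fun t ω => Kh K h (‖X ω - (s + t • v)‖ ^ 2) with hF
  set F' : ℝ → Ω → ℝ := fun t ω =>
    deriv (Kh K h) (‖X ω - (s + t • v)‖ ^ 2) * (2 * (t * ‖v‖ ^ 2 - ⟪X ω - s, v⟫_ℝ)) with hF'
  have hsub : ∀ (t : ℝ) (ω : Ω), X ω - (s + t • v) = (X ω - s) - t • v := by
    intro t ω; abel
  have hDiff : ∀ (ω : Ω) (t : ℝ), HasDerivAt (fun t => F t ω) (F' t ω) t := by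
    intro ω t
    have hq : (fun t : ℝ => ‖X ω - (s + t • v)‖ ^ 2)
        = fun t => ‖X ω - s‖ ^ 2 - 2 * (t * ⟪X ω - s, v⟫_ℝ) + t ^ 2 * ‖v‖ ^ 2 := by
      funext t
      rw [hsub t ω, norm_sub_sq_real, real_inner_smul_right, norm_smul]
      simp only [Real.norm_eq_abs, mul_pow, sq_abs]
    have hq' : HasDerivAt (fun t : ℝ => ‖X ω - (s + t • v)‖ ^ 2)
        (2 * (t * ‖v‖ ^ 2 - ⟪X ω - s, v⟫_ℝ)) t := by
      rw [hq]
      have h1 : HasDerivAt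
          (fun t : ℝ => ‖X ω - s‖ ^ 2 - 2 * (t * ⟪X ω - s, v⟫_ℝ) + t ^ 2 * ‖v‖ ^ 2)
          (-(2 * (1 * ⟪X ω - s, v⟫_ℝ)) + (↑(2:ℕ) * t ^ (2 - 1)) * ‖v‖ ^ 2) t :=
        ((((hasDerivAt_id t).mul_const _).const_mul 2).const_sub _).add
          ((hasDerivAt_pow 2 t).mul_const _)
      convert h1 using 1
      push_cast
      ring
    exact (hKhdiff _).hasDerivAt.comp t hq'
  have hK1bd : ∀ (ω : Ω) (t : ℝ), |F' t ω| ≤ 2 * K1 * ‖v‖ := by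
    intro ω t
    have hr0 : (0:ℝ) ≤ ‖X ω - (s + t • v)‖ := norm_nonneg _
    have hinner : t * ‖v‖ ^ 2 - ⟪X ω - s, v⟫_ℝ = -⟪X ω - (s + t • v), v⟫_ℝ := by
      rw [hsub t ω]
      simp only [inner_sub_left, real_inner_smul_left, real_inner_self_eq_norm_sq]
      ring
    have h1 : |⟪X ω - (s + t • v), v⟫_ℝ| ≤ ‖X ω - (s + t • v)‖ * ‖v‖ :=
      abs_real_inner_le_norm _ _
    have h2 : |deriv (Kh K h) (‖X ω - (s + t • v)‖ ^ 2) * ‖X ω - (s + t • v)‖| ≤ K1 :=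
      hH1.bound1 _ hr0
    have h2' : |deriv (Kh K h) (‖X ω - (s + t • v)‖ ^ 2)| * ‖X ω - (s + t • v)‖ ≤ K1 := by
      rwa [abs_mul, abs_of_nonneg hr0] at h2
    calc |F' t ω|
        = |deriv (Kh K h) (‖X ω - (s + t • v)‖ ^ 2)|
            * (2 * |⟪X ω - (s + t • v), v⟫_ℝ|) := by
          simp only [hF', hinner, abs_mul, abs_neg, abs_two]
      _ ≤ |deriv (Kh K h) (‖X ω - (s + t • v)‖ ^ 2)|
            * (2 * (‖X ω - (s + t • v)‖ * ‖v‖)) := by gcongr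
      _ = 2 * (|deriv (Kh K h) (‖X ω - (s + t • v)‖ ^ 2)| * ‖X ω - (s + t • v)‖) * ‖v‖ := by
          ring
      _ ≤ 2 * K1 * ‖v‖ := by gcongr
  have hFmeas : ∀ t : ℝ, AEStronglyMeasurable (F t) P := fun t =>
    hcontKh.comp_aestronglyMeasurable (hmSq (s + t • v))
  have hinner_meas : AEStronglyMeasurable (fun ω => ⟪X ω - s, v⟫_ℝ) P := by
    have hc : Continuous (fun z : L2 => ⟪z, v⟫_ℝ) := continuous_id.inner continuous_const
    exact hc.comp_aestronglyMeasurable (hXmeas.sub aestronglyMeasurable_const)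
  have hF'meas : AEStronglyMeasurable (F' 1) P := by
    apply AEStronglyMeasurable.mul
    · exact hcontd.comp_aestronglyMeasurable (hmSq (s + (1:ℝ) • v))
    · exact (aestronglyMeasurable_const.sub hinner_meas).const_mul 2
  have hFint : Integrable (F 1) P := by
    apply Integrable.mono' (integrable_const K0) (hFmeas 1)
    filter_upwards with ω
    have hb := hb0 ‖X ω - (s + (1:ℝ) • v)‖ (norm_nonneg _)
    simpa [hF, Real.norm_eq_abs] using hb
  obtain ⟨hF'int, hder⟩ :=
    hasDerivAt_integral_of_dominated_loc_of_deriv_le (μ := P) (F := F) (F' := F') (x₀ := 1)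
      (bound := fun _ => 2 * K1 * ‖v‖) (Metric.ball_mem_nhds (1:ℝ) one_pos)
      (Filter.Eventually.of_forall fun t => hFmeas t) hFint hF'meas
      (Filter.Eventually.of_forall fun ω t _ => hK1bd ω t) (integrable_const _)
      (Filter.Eventually.of_forall fun ω t _ => hDiff ω t)
  have hy1 : s + (1:ℝ) • v = y := by rw [one_smul, hvdef]; abel
  have hc1 : HasDerivAt (fun t : ℝ => s + t • v) v 1 := by
    simpa using ((hasDerivAt_id (1:ℝ)).smul_const v).const_add s
  have hgrad : HasDerivAt (fun t : ℝ => pseudoDensity P X K h (s + t • v)) ⟪G y, v⟫_ℝ 1 := by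
    have h1 : HasFDerivAt (pseudoDensity P X K h)
        (InnerProductSpace.toDual ℝ L2 (G y)) ((fun t : ℝ => s + t • v) 1) := by
      simp only [hy1]
      exact (hG y).hasFDerivAt
    have h2 := h1.comp_hasDerivAt 1 hc1
    simp only [InnerProductSpace.toDual_apply_apply] at h2
    exact h2
  have hEq : ⟪G y, v⟫_ℝ = ∫ ω, F' 1 ω ∂P := by
    have hfun : (fun t : ℝ => pseudoDensity P X K h (s + t • v)) = fun n => ∫ ω, F n ω ∂P := rfl
    rw [hfun] at hgrad
    exact hgrad.unique hder
  have hIint : Integrable (fun ω => deriv (Kh K h) (‖X ω - y‖ ^ 2)) P := by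
    apply Integrable.mono' (integrable_const K2) (hcontd.comp_aestronglyMeasurable (hmSq y))
    filter_upwards with ω
    simpa [Real.norm_eq_abs] using hb2 (‖X ω - y‖ ^ 2) (by positivity)
  have hF'eq : ∫ ω, F' 1 ω ∂P
      = 2 * ‖v‖ ^ 2 * ∫ ω, deriv (Kh K h) (‖X ω - y‖ ^ 2) ∂P := by
    rw [← integral_const_mul]
    apply integral_congr_ae
    filter_upwards [hXS] with ω hω
    have h0 : ⟪X ω - s, v⟫_ℝ = 0 := by
      have hXs : X ω - s ∈ S := S.sub_mem hω (SetLike.coe_mem _)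
      exact (Submodule.mem_orthogonal S v).mp hvmem _ hXs
    simp only [hF', h0, hy1]
    ring
  have hH2' : ∀ w : ℝ, 0 ≤ w → deriv K w ≤ -K w := by
    intro w hw
    have h1 := hH2 (Real.sqrt w) (Real.sqrt_nonneg w)
    rw [Real.sq_sqrt hw] at h1; linarith
  have hptw : ∀ ω : Ω, deriv (Kh K h) (‖X ω - y‖ ^ 2)
      ≤ -(1/h) * Kh K h (‖X ω - y‖ ^ 2) := by
    intro ω
    rw [aux_deriv_Kh hKd hh]
    have harg : (0:ℝ) ≤ ‖X ω - y‖ ^ 2 / h := by positivity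
    have h1 := hH2' _ harg
    calc deriv K (‖X ω - y‖ ^ 2 / h) / h ≤ (-K (‖X ω - y‖ ^ 2 / h)) / h := by gcongr
      _ = -(1/h) * Kh K h (‖X ω - y‖ ^ 2) := by
          show -K (‖X ω - y‖ ^ 2 / h) / h = -(1/h) * K (‖X ω - y‖ ^ 2 / h)
          ring
  have hphint : Integrable (fun ω => Kh K h (‖X ω - y‖ ^ 2)) P := by
    apply Integrable.mono' (integrable_const K0) (hcontKh.comp_aestronglyMeasurable (hmSq y))
    filter_upwards with ω
    simpa [Real.norm_eq_abs] using hb0 ‖X ω - y‖ (norm_nonneg _)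
  have hIle : (∫ ω, deriv (Kh K h) (‖X ω - y‖ ^ 2) ∂P)
      ≤ -(1/h) * pseudoDensity P X K h y := by
    rw [pseudoDensity, ← integral_const_mul]
    exact integral_mono hIint (hphint.const_mul _) (fun ω => hptw ω)
  rw [hEq, hF'eq]
  have h2v : (0:ℝ) ≤ 2 * ‖v‖ ^ 2 := by positivity
  calc 2 * ‖v‖ ^ 2 * ∫ ω, deriv (Kh K h) (‖X ω - y‖ ^ 2) ∂P
      ≤ 2 * ‖v‖ ^ 2 * (-(1/h) * pseudoDensity P X K h y) :=
        mul_le_mul_of_nonneg_left hIle h2v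
    _ = -(2 * ‖v‖ ^ 2 / h) * pseudoDensity P X K h y := by ring


/-- Lemma 5 of the paper. Under (H1) and (H2), if `S` is a
finite-dimensional subspace of `L²`, `Sc ⊆ S` is compact and `P(X ∈ Sc) = 1`, then:
(i) `Dp_h(x) ∈ S` for all `x ∈ S`, hence any solution of the gradient flow started in `S`
stays in `S`; (ii) every nontrivial critical point of `p_h` belongs to `S`. -/
theorem statement10
    {Ω : Type*} [MeasurableSpace Ω] (P : Measure Ω) [IsProbabilityMeasure P]
    (X : Ω → L2) (K : ℝ → ℝ) (h K0 K1 K2 K3 : ℝ) (hh : 0 < h)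
    (hH1 : AssumpH1 K h K0 K1 K2 K3)
    (hH2 : AssumpH2 K)
    (hXmeas : AEStronglyMeasurable X P)
    (S : Submodule ℝ L2) (hS : FiniteDimensional ℝ S)
    (Sc : Set L2) (hScS : Sc ⊆ (S : Set L2)) (hScComp : IsCompact Sc)
    (hXSc : ∀ᵐ ω ∂P, X ω ∈ Sc)
    (G : L2 → L2)
    (hG : ∀ y : L2, HasGradientAt (pseudoDensity P X K h) (G y) y) :
    (∀ x : L2, x ∈ S → G x ∈ S) ∧
    (∀ γ : ℝ → L2, γ 0 ∈ S →
      (∀ t : ℝ, 0 ≤ t → HasDerivWithinAt γ (G (γ t)) (Set.Ici 0) t) →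
      ∀ t : ℝ, 0 ≤ t → γ t ∈ S) ∧
    (∀ x : L2, G x = 0 → 0 < pseudoDensity P X K h x → x ∈ S) := by
  haveI : CompleteSpace S := FiniteDimensional.complete ℝ S
  have hXS : ∀ᵐ ω ∂P, X ω ∈ S := hXSc.mono fun ω hω => hScS hω
  have hpd0 : ∀ y : L2, 0 ≤ pseudoDensity P X K h y := fun y =>
    integral_nonneg fun ω => hH1.nonneg _ (by positivity)
  have key : ∀ y : L2, ⟪G y, y - (Submodule.orthogonalProjection S y : L2)⟫_ℝ ≤
      -(2 * ‖y - (Submodule.orthogonalProjection S y : L2)‖ ^ 2 / h) * pseudoDensity P X K h y :=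
    key_ineq P X K h K0 K1 K2 K3 hh hH1 hH2 hXmeas S hXS G hG
  have keyle : ∀ y : L2, ⟪G y, y - (Submodule.orthogonalProjection S y : L2)⟫_ℝ ≤ 0 := by
    intro y
    have h1 := key y
    have h2 : (0:ℝ) ≤ 2 * ‖y - (Submodule.orthogonalProjection S y : L2)‖ ^ 2 / h := by positivity
    nlinarith [hpd0 y]
  have part1 : ∀ x : L2, x ∈ S → G x ∈ S := by
    intro x hx
    have hpR : (pseudoDensity P X K h) ∘ ⇑(Submodule.reflection S) = pseudoDensity P X K h := by
      funext z
      show (∫ ω, Kh K h (‖X ω - Submodule.reflection S z‖ ^ 2) ∂P) = _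
      apply integral_congr_ae
      filter_upwards [hXS] with ω hω
      have h1 : X ω - Submodule.reflection S z = Submodule.reflection S (X ω - z) := by
        rw [map_sub, Submodule.reflection_mem_subspace_eq_self hω]
      rw [h1, (Submodule.reflection S).norm_map]
    have hfd1 : HasFDerivAt (pseudoDensity P X K h)
        (InnerProductSpace.toDual ℝ L2 (G x)) x := (hG x).hasFDerivAt
    have hRx : Submodule.reflection S x = x := Submodule.reflection_mem_subspace_eq_self hx
    have hRfd : HasFDerivAt (⇑(Submodule.reflection S))
        ((Submodule.reflection S).toContinuousLinearEquiv : L2 →L[ℝ] L2) x := by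
      simpa [(Submodule.reflection S).coe_toContinuousLinearEquiv] using
        (Submodule.reflection S).toContinuousLinearEquiv.hasFDerivAt
    have hfd2 : HasFDerivAt (pseudoDensity P X K h)
        ((InnerProductSpace.toDual ℝ L2 (G x)).comp
          ((Submodule.reflection S).toContinuousLinearEquiv : L2 →L[ℝ] L2)) x := by
      have hcomp := HasFDerivAt.comp x (by rw [hRx]; exact hfd1) hRfd
      rwa [hpR] at hcomp
    have huniq := hfd1.unique hfd2
    rw [← Submodule.orthogonal_orthogonal S, Submodule.mem_orthogonal]
    intro w hw
    have h1 : ⟪G x, w⟫_ℝ = ⟪G x, Submodule.reflection S w⟫_ℝ := by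
      have h2 := DFunLike.congr_fun huniq w
      simpa [ContinuousLinearMap.comp_apply, (Submodule.reflection S).coe_toContinuousLinearEquiv,
        InnerProductSpace.toDual_apply_apply] using h2
    rw [Submodule.reflection_mem_subspace_orthogonalComplement_eq_neg hw, inner_neg_right] at h1
    have h3 : ⟪G x, w⟫_ℝ = 0 := by linarith
    rw [real_inner_comm] at h3
    exact h3
  refine ⟨part1, ?_, ?_⟩
  · intro γ hγ0 hγ' t ht
    set Q : L2 →L[ℝ] L2 :=
      ContinuousLinearMap.id ℝ L2 - S.subtypeL.comp (Submodule.orthogonalProjection S) with hQ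
    have hQapp : ∀ z : L2, Q z = z - (Submodule.orthogonalProjection S z : L2) := fun z => by
      simp [hQ, ContinuousLinearMap.sub_apply]
    set φ : ℝ → ℝ := fun t => ⟪Q (γ t), Q (γ t)⟫_ℝ with hφ
    have hφd : ∀ u : ℝ, 0 ≤ u →
        HasDerivWithinAt φ (2 * ⟪Q (γ u), Q (G (γ u))⟫_ℝ) (Set.Ici 0) u := by
      intro u hu
      have hQγ : HasDerivWithinAt (fun t => Q (γ t)) (Q (G (γ u))) (Set.Ici 0) u :=
        Q.hasFDerivAt.comp_hasDerivWithinAt u (hγ' u hu)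
      have h1 := HasDerivWithinAt.inner ℝ hQγ hQγ
      have h2 : 2 * ⟪Q (γ u), Q (G (γ u))⟫_ℝ
          = ⟪Q (γ u), Q (G (γ u))⟫_ℝ + ⟪Q (G (γ u)), Q (γ u)⟫_ℝ := by
        rw [real_inner_comm (Q (γ u))]; ring
      rw [h2]; exact h1
    have hφle : ∀ u : ℝ, 0 ≤ u → 2 * ⟪Q (γ u), Q (G (γ u))⟫_ℝ ≤ 0 := by
      intro u _
      have hQmem : Q (γ u) ∈ Sᗮ := by
        rw [hQapp]; exact Submodule.sub_starProjection_mem_orthogonal _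
      have h1 : ⟪Q (γ u), Q (G (γ u))⟫_ℝ = ⟪G (γ u), Q (γ u)⟫_ℝ := by
        have hsplit : ⟪Q (γ u), Q (G (γ u))⟫_ℝ
            = ⟪Q (γ u), G (γ u)⟫_ℝ
              - ⟪Q (γ u), (Submodule.orthogonalProjection S (G (γ u)) : L2)⟫_ℝ := by
          rw [hQapp (G (γ u)), inner_sub_right]
        have hz : ⟪Q (γ u), (Submodule.orthogonalProjection S (G (γ u)) : L2)⟫_ℝ = 0 := by
          rw [real_inner_comm]
          exact (Submodule.mem_orthogonal S _).mp hQmem _ (SetLike.coe_mem _)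
        rw [hsplit, hz, sub_zero, real_inner_comm]
      have h2 := keyle (γ u)
      rw [h1, hQapp]
      linarith
    have hcont : ContinuousOn φ (Set.Ici 0) := fun u hu => (hφd u hu).continuousWithinAt
    have hφat : ∀ u ∈ interior (Set.Ici (0:ℝ)),
        HasDerivAt φ (2 * ⟪Q (γ u), Q (G (γ u))⟫_ℝ) u := by
      intro u hu
      rw [interior_Ici] at hu
      exact (hφd u (le_of_lt hu)).hasDerivAt (Ici_mem_nhds hu)
    have hanti : AntitoneOn φ (Set.Ici 0) := by
      apply antitoneOn_of_deriv_nonpos (convex_Ici 0) hcont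
      · intro u hu
        exact ((hφat u hu).differentiableAt).differentiableWithinAt
      · intro u hu
        rw [(hφat u hu).deriv]
        exact hφle u (le_of_lt (by rwa [interior_Ici] at hu))
    have hφ0 : φ 0 = 0 := by
      have hq0 : Q (γ 0) = 0 := by
        rw [hQapp, sub_eq_zero]
        exact (Submodule.starProjection_eq_self_iff.mpr hγ0).symm
      simp [hφ, hq0]
    have h1 : φ t ≤ 0 := by
      have h2 := hanti Set.self_mem_Ici (Set.mem_Ici.mpr ht) ht
      rw [hφ0] at h2
      exact h2
    have h2 : (0:ℝ) ≤ φ t := real_inner_self_nonneg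
    have h3 : Q (γ t) = 0 := inner_self_eq_zero.mp (le_antisymm h1 h2)
    have h4 : γ t = (Submodule.orthogonalProjection S (γ t) : L2) := by
      have h5 := hQapp (γ t)
      rw [h3] at h5
      exact sub_eq_zero.mp h5.symm
    rw [h4]
    exact SetLike.coe_mem _
  · intro x hGx hpx
    by_contra hxS
    have hv : x - (Submodule.orthogonalProjection S x : L2) ≠ 0 := by
      intro h0
      apply hxS
      rw [sub_eq_zero.mp h0]
      exact SetLike.coe_mem _
    have hkey := key x
    rw [hGx, inner_zero_left] at hkey
    have hn0 : 0 < ‖x - (Submodule.orthogonalProjection S x : L2)‖ := norm_pos_iff.mpr hv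
    have hnorm : 0 < ‖x - (Submodule.orthogonalProjection S x : L2)‖ ^ 2 := by positivity
    have hpos : 0 < 2 * ‖x - (Submodule.orthogonalProjection S x : L2)‖ ^ 2 / h := by positivity
    nlinarith

end
end

section
/- Let f₁, f₂ : L² → ℝ be three times continuously Fréchet differentiable with sup_{x∈L²}‖D^k f_i(x)‖ ≤ β_k < ∞ for k = 0,1,2,3 and i = 1,2, and let M > 0. Set η_l = sup_{x ∈ B_{H¹₀}(0,M)} ‖D^l f₁(x) − D^l f₂(x)‖ for l = 0,1,2 (appropriate operator norms). Assume (C1): all nontrivial critical points of f₁ and f₂ lie in H¹₀; and (C2): for every initial value in H¹₀ the initial value problem π'(t) = Df_i(π(t)) has a global H¹₀-valued solution whose trajectory admits an L²-convergent subsequence. Let x₂* be a nondegenerate local maximum of f₂ with ‖x₂*‖_{H¹₀} < M and put δ = −sup_{‖u‖_{L²}=1} D²f₂(x₂*)(u,u) > 0. If η₁ ≤ δ²/(8β₃) and η₂ ≤ δ/8, then there exists x₁* in the L² ball B_{L²}(x₂*, δ/(2β₃)) such that: (1) x₁* is the unique local maximum of f₁ in B_{L²}(x₂*, δ/(2β₃));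 (2) sup_{‖u‖_{L²}=1} D²f₁(x₁*)(u,u) ≤ −3δ/8; (3) ‖x₁* − x₂*‖_{L²} ≤ 8η₁/δ. -/
open MeasureTheory ProbabilityTheory Real Set Filter
open scoped InnerProductSpace ENNReal NNReal Topology

noncomputable section

section Helpers
open Metric

lemma line_hasDerivAt (c d : L2) (s : ℝ) : HasDerivAt (fun t : ℝ => c + t • d) d s := by
  simpa using ((hasDerivAt_id s).smul_const d).const_add c

lemma lineDeriv_grad (f : L2 → ℝ) (G : L2 → L2) (hG : ∀ x, HasGradientAt f (G x) x)
    (c d : L2) (s : ℝ) :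
    HasDerivAt (fun t : ℝ => f (c + t • d)) ⟪G (c + s • d), d⟫_ℝ s := by
  have h := (hG (c + s • d)).hasFDerivAt.comp_hasDerivAt s (line_hasDerivAt c d s)
  simp [InnerProductSpace.toDual_apply_apply] at h
  exact h

lemma lineDeriv_inner (G : L2 → L2) (D : L2 → (L2 →L[ℝ] L2))
    (hD : ∀ x, HasFDerivAt G (D x) x) (c d e : L2) (s : ℝ) :
    HasDerivAt (fun t : ℝ => ⟪G (c + t • d), e⟫_ℝ) ⟪D (c + s • d) d, e⟫_ℝ s := by
  have h1 : HasDerivAt (fun t : ℝ => G (c + t • d)) (D (c + s • d) d) s :=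
    (hD (c + s • d)).comp_hasDerivAt s (line_hasDerivAt c d s)
  have h2 := (h1.inner ℝ (hasDerivAt_const s e))
  simpa using h2

lemma mvt_le (φ φ' : ℝ → ℝ) (h : ∀ s, HasDerivAt φ (φ' s) s) (c : ℝ)
    (hb : ∀ s ∈ Set.Ioo (0:ℝ) 1, φ' s ≤ c) : φ 1 - φ 0 ≤ c := by
  obtain ⟨s, hs, heq⟩ := exists_hasDerivAt_eq_slope φ φ' one_pos
    (fun x _ => (h x).continuousAt.continuousWithinAt) (fun x _ => h x)
  have := hb s hs
  rw [heq] at this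
  simpa using this

lemma grad_mono (G : L2 → L2) (D : L2 → (L2 →L[ℝ] L2)) (hD : ∀ x, HasFDerivAt G (D x) x)
    (S : Set L2) (hconv : Convex ℝ S) (m : ℝ)
    (hneg : ∀ z ∈ S, ∀ v : L2, ⟪D z v, v⟫_ℝ ≤ -m * ‖v‖ ^ 2)
    (x y : L2) (hx : x ∈ S) (hy : y ∈ S) :
    ⟪G x - G y, x - y⟫_ℝ ≤ -m * ‖x - y‖ ^ 2 := by
  have key := mvt_le (fun t : ℝ => ⟪G (y + t • (x - y)), x - y⟫_ℝ)
    (fun s => ⟪D (y + s • (x - y)) (x - y), x - y⟫_ℝ)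
    (fun s => lineDeriv_inner G D hD y (x - y) (x - y) s) (-m * ‖x - y‖ ^ 2)
    (fun s hs => hneg _ (hconv.add_smul_sub_mem hy hx ⟨hs.1.le, hs.2.le⟩) _)
  simpa [inner_sub_left] using key

lemma concave_max (f : L2 → ℝ) (G : L2 → L2) (hG : ∀ x, HasGradientAt f (G x) x)
    (S : Set L2) (hconv : Convex ℝ S)
    (hmono : ∀ x ∈ S, ∀ y ∈ S, ⟪G x - G y, x - y⟫_ℝ ≤ 0)
    (x₁ : L2) (hx₁ : x₁ ∈ S) (hcrit : G x₁ = 0) (x : L2) (hx : x ∈ S) : f x ≤ f x₁ := by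
  have key := mvt_le (fun t : ℝ => f (x₁ + t • (x - x₁)))
    (fun s => ⟪G (x₁ + s • (x - x₁)), x - x₁⟫_ℝ)
    (fun s => lineDeriv_grad f G hG x₁ (x - x₁) s) 0 ?_
  · simpa using key
  · intro s hs
    set z := x₁ + s • (x - x₁) with hz
    have hzS : z ∈ S := hconv.add_smul_sub_mem hx₁ hx ⟨hs.1.le, hs.2.le⟩
    have h1 := hmono z hzS x₁ hx₁
    rw [hcrit] at h1
    have h2 : z - x₁ = s • (x - x₁) := by rw [hz]; abel
    rw [h2, sub_zero, real_inner_smul_right] at h1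
    nlinarith [hs.1]

instance : MeasureTheory.IsFiniteMeasure μ01 :=
  ⟨by rw [μ01, MeasureTheory.Measure.restrict_apply_univ]; simp [Real.volume_Icc]⟩

lemma exists_unit : ∃ u : L2, ‖u‖ = 1 := by
  have huniv : μ01 Set.univ = 1 := by
    rw [μ01, MeasureTheory.Measure.restrict_apply_univ]; simp [Real.volume_Icc]
  have hμ : μ01 ≠ 0 := by intro h; rw [h] at huniv; simp at huniv
  have h1 : MemLp (fun _ : ℝ => (1:ℝ)) 2 μ01 := memLp_const 1
  refine ⟨h1.toLp _, ?_⟩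
  rw [Lp.norm_toLp, eLpNorm_const _ (by norm_num) hμ, huniv]
  simp

lemma negdef_gap (T : L2 →L[ℝ] L2) (β₂ : ℝ) (hT : ‖T‖ ≤ β₂)
    (hsym : ∀ v w : L2, ⟪T v, w⟫_ℝ = ⟪v, T w⟫_ℝ)
    (hneg : ∀ v : L2, v ≠ 0 → ⟪T v, v⟫_ℝ < 0)
    (hiso : ∃ E : L2 ≃L[ℝ] L2, (E : L2 →L[ℝ] L2) = T) :
    ∃ ε : ℝ, 0 < ε ∧ ∀ u : L2, ‖u‖ = 1 → ⟪T u, u⟫_ℝ ≤ -ε := by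
  obtain ⟨E, hE⟩ := hiso
  set B : L2 → L2 → ℝ := fun u v => -⟪T u, v⟫_ℝ with hB
  have hBnn : ∀ w, 0 ≤ B w w := by
    intro w
    rcases eq_or_ne w 0 with h | h
    · simp [hB, h]
    · simpa [hB] using (hneg w h).le
  have hCS : ∀ u v, (B u v) ^ 2 ≤ B u u * B v v := by
    intro u v
    have hquad : ∀ t : ℝ, 0 ≤ B v v * (t * t) + (2 * B u v) * t + B u u := by
      intro t
      have expand : B (u + t • v) (u + t • v)
          = B v v * (t * t) + (2 * B u v) * t + B u u := by
        have h2 : ⟪T v, u⟫_ℝ = ⟪T u, v⟫_ℝ := by rw [hsym v u, real_inner_comm]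
        simp only [hB, T.map_add, T.map_smul, inner_add_left, inner_add_right,
          real_inner_smul_left, real_inner_smul_right]
        rw [h2]; ring
      rw [← expand]; exact hBnn _
    have := discrim_le_zero hquad
    rw [discrim] at this
    nlinarith [this]
  have hβ₂pos : 0 < β₂ := by
    obtain ⟨u₀, hu₀⟩ := exists_unit
    have h1 : u₀ ≠ 0 := by intro h; rw [h] at hu₀; simp at hu₀
    have h2 : T u₀ ≠ 0 := by
      intro h
      exact absurd (hneg u₀ h1) (by rw [h]; simp)
    have h3 : 0 < ‖T u₀‖ := norm_pos_iff.mpr h2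
    calc (0:ℝ) < ‖T u₀‖ := h3
    _ ≤ ‖T‖ * ‖u₀‖ := T.le_opNorm u₀
    _ = ‖T‖ := by rw [hu₀, mul_one]
    _ ≤ β₂ := hT
  set K : ℝ := max ‖(E.symm : L2 →L[ℝ] L2)‖ 1 with hKdef
  have hK1 : 1 ≤ K := le_max_right _ _
  have hKpos : 0 < K := lt_of_lt_of_le one_pos hK1
  refine ⟨1 / (K ^ 2 * β₂), by positivity, ?_⟩
  intro u hu
  have hune : u ≠ 0 := by intro h; rw [h] at hu; simp at hu
  have hTu : T u ≠ 0 := by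
    intro h
    exact absurd (hneg u hune) (by rw [h]; simp)
  have hTupos : 0 < ‖T u‖ := norm_pos_iff.mpr hTu
  -- antilipschitz: ‖u‖ ≤ ‖E.symm‖ * ‖T u‖
  have hanti : ‖u‖ ≤ K * ‖T u‖ := by
    have : E.symm (T u) = u := by rw [← hE]; exact E.symm_apply_apply u
    calc ‖u‖ = ‖E.symm (T u)‖ := by rw [this]
    _ ≤ ‖(E.symm : L2 →L[ℝ] L2)‖ * ‖T u‖ := (E.symm : L2 →L[ℝ] L2).le_opNorm _
    _ ≤ K * ‖T u‖ := by
        apply mul_le_mul_of_nonneg_right (le_max_left _ _) hTupos.le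
  have hTulow : 1 / K ≤ ‖T u‖ := by
    rw [div_le_iff₀ hKpos] at *
    nlinarith [hanti, hu]
  -- key: ‖T u‖^2 ≤ β₂ * B u u
  have hkey : ‖T u‖ ^ 2 ≤ β₂ * B u u := by
    have h1 := hCS u (T u)
    have h2 : B u (T u) = -(‖T u‖ ^ 2) := by
      simp [hB, real_inner_self_eq_norm_sq]
    have h3 : B (T u) (T u) ≤ β₂ * ‖T u‖ ^ 2 := by
      have := abs_real_inner_le_norm (T (T u)) (T u)
      have h4 : ‖T (T u)‖ ≤ β₂ * ‖T u‖ := by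
        calc ‖T (T u)‖ ≤ ‖T‖ * ‖T u‖ := T.le_opNorm _
        _ ≤ β₂ * ‖T u‖ := mul_le_mul_of_nonneg_right hT hTupos.le
      have h5 : B (T u) (T u) ≤ ‖T (T u)‖ * ‖T u‖ := by
        simp only [hB]
        have := neg_abs_le ⟪T (T u), T u⟫_ℝ
        nlinarith [abs_real_inner_le_norm (T (T u)) (T u)]
      nlinarith
    rw [h2] at h1
    have h6 : (‖T u‖ ^ 2) ^ 2 ≤ B u u * (β₂ * ‖T u‖ ^ 2) := by
      calc (‖T u‖ ^ 2) ^ 2 = (-(‖T u‖ ^ 2)) ^ 2 := by ring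
      _ ≤ B u u * B (T u) (T u) := h1
      _ ≤ B u u * (β₂ * ‖T u‖ ^ 2) := mul_le_mul_of_nonneg_left h3 (hBnn u)
    have h7 : ‖T u‖ ^ 2 * ‖T u‖ ^ 2 ≤ (β₂ * B u u) * ‖T u‖ ^ 2 := by nlinarith
    exact le_of_mul_le_mul_right h7 (by positivity)
  have : 1 / (K ^ 2 * β₂) ≤ B u u := by
    rw [div_le_iff₀ (by positivity)]
    have h7 : (1/K)^2 ≤ ‖T u‖ ^ 2 := by
      apply pow_le_pow_left₀ (by positivity) hTulow
    have h8 : 1 / K ^ 2 ≤ β₂ * B u u := by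
      calc 1 / K ^ 2 = (1/K)^2 := by ring
      _ ≤ ‖T u‖ ^ 2 := h7
      _ ≤ β₂ * B u u := hkey
    rw [div_le_iff₀ (by positivity)] at h8
    nlinarith
  simp only [hB] at this
  linarith

lemma fixed_point_exists (G : L2 → L2) (x₂ : L2) (r t q : ℝ) (hr : 0 ≤ r) (ht : 0 < t)
    (hq : q < 1) (hq0 : 0 ≤ q)
    (hcontr : ∀ x ∈ closedBall x₂ r, ∀ y ∈ closedBall x₂ r,
      ‖(x + t • G x) - (y + t • G y)‖ ≤ q * ‖x - y‖)
    (hself : q * r + t * ‖G x₂‖ ≤ r) :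
    ∃ x₁ ∈ closedBall x₂ r, G x₁ = 0 := by
  have hx₂mem : x₂ ∈ closedBall x₂ r := mem_closedBall_self hr
  have hmap : ∀ x ∈ closedBall x₂ r, x + t • G x ∈ closedBall x₂ r := by
    intro x hx
    rw [mem_closedBall, dist_eq_norm]
    calc ‖x + t • G x - x₂‖
        = ‖((x + t • G x) - (x₂ + t • G x₂)) + t • G x₂‖ := by congr 1; abel
      _ ≤ ‖(x + t • G x) - (x₂ + t • G x₂)‖ + ‖t • G x₂‖ := norm_add_le _ _
      _ ≤ q * ‖x - x₂‖ + t * ‖G x₂‖ := by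
          gcongr
          · exact hcontr x hx x₂ hx₂mem
          · rw [norm_smul, Real.norm_eq_abs, abs_of_pos ht]
      _ ≤ q * r + t * ‖G x₂‖ := by
          have : ‖x - x₂‖ ≤ r := by rwa [mem_closedBall, dist_eq_norm] at hx
          gcongr
      _ ≤ r := hself
  haveI : Nonempty ↥(closedBall x₂ r) := ⟨⟨x₂, hx₂mem⟩⟩
  haveI : CompleteSpace ↥(closedBall x₂ r) :=
    IsClosed.completeSpace_coe (hs := Metric.isClosed_closedBall)
  set T' : ↥(closedBall x₂ r) → ↥(closedBall x₂ r) :=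
    fun x => ⟨x.1 + t • G x.1, hmap x.1 x.2⟩ with hT'
  have hC : ContractingWith ⟨q, hq0⟩ T' := by
    constructor
    · exact_mod_cast hq
    · apply LipschitzWith.of_dist_le_mul
      intro x y
      rw [Subtype.dist_eq, dist_eq_norm, Subtype.dist_eq, dist_eq_norm]
      exact hcontr x.1 x.2 y.1 y.2
  set z := hC.fixedPoint T' with hz
  have hfix : T' z = z := hC.fixedPoint_isFixedPt
  refine ⟨z.1, z.2, ?_⟩
  have : z.1 + t • G z.1 = z.1 := congrArg Subtype.val hfix
  have h2 : t • G z.1 = 0 := by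
    have := congrArg (fun w => w - z.1) this
    simpa using this
  rcases smul_eq_zero.mp h2 with h | h
  · exact absurd h ht.ne'
  · exact h

end Helpers

set_option maxHeartbeats 2000000 in
/-- Lemma 8 of the paper. Let `f₁, f₂ : L² → ℝ` be three times
continuously Fréchet differentiable with uniformly bounded derivatives up to order 3
(bounds `β₀,…,β₃`), satisfying (C1) and (C2). Let `x₂*` be a nondegenerate local maximum
of `f₂` with `‖x₂*‖_{H¹₀} < M`, let `δ = −sup_{‖u‖=1} D²f₂(x₂*)(u,u) > 0`, and suppose
`η₁ ≤ δ²/(8β₃)`, `η₂ ≤ δ/8` where `η_l` bounds the discrepancy of the `l`-th derivatives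
on the `H¹₀` ball of radius `M`. Then there is `x₁*` in the `L²` ball
`B(x₂*, δ/(2β₃))` which is the unique local maximum of `f₁` there, with
`sup_{‖u‖=1} D²f₁(x₁*)(u,u) ≤ −3δ/8` and `‖x₁* − x₂*‖_{L²} ≤ 8η₁/δ`. -/
theorem statement14
    (f₁ f₂ : L2 → ℝ) (G₁ G₂ : L2 → L2) (D₁ D₂ : L2 → (L2 →L[ℝ] L2))
    (D₁₃ D₂₃ : L2 → (L2 →L[ℝ] (L2 →L[ℝ] L2)))
    (β₀ β₁ β₂ β₃ M η₀ η₁ η₂ : ℝ) (hM : 0 < M) (hβ₃ : 0 < β₃)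
    (hf₁ : ContDiff ℝ 3 f₁) (hf₂ : ContDiff ℝ 3 f₂)
    (hG₁ : ∀ x : L2, HasGradientAt f₁ (G₁ x) x)
    (hG₂ : ∀ x : L2, HasGradientAt f₂ (G₂ x) x)
    (hD₁ : ∀ x : L2, HasFDerivAt G₁ (D₁ x) x)
    (hD₂ : ∀ x : L2, HasFDerivAt G₂ (D₂ x) x)
    (hD₁₃ : ∀ x : L2, HasFDerivAt D₁ (D₁₃ x) x)
    (hD₂₃ : ∀ x : L2, HasFDerivAt D₂ (D₂₃ x) x)
    -- uniform bounds β₀,…,β₃ on the derivatives of f₁ and f₂: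
    (hβ₀ : ∀ x : L2, |f₁ x| ≤ β₀ ∧ |f₂ x| ≤ β₀)
    (hβ₁ : ∀ x : L2, ‖G₁ x‖ ≤ β₁ ∧ ‖G₂ x‖ ≤ β₁)
    (hβ₂ : ∀ x : L2, ‖D₁ x‖ ≤ β₂ ∧ ‖D₂ x‖ ≤ β₂)
    (hβ₃b : ∀ x : L2, ‖D₁₃ x‖ ≤ β₃ ∧ ‖D₂₃ x‖ ≤ β₃)
    -- η_l bounds the discrepancy of the l-th derivatives on the H¹₀ ball of radius M:
    (hη : ∀ x x' : L2, IsWeakDeriv x' x → ‖x'‖ ≤ M →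
      |f₁ x - f₂ x| ≤ η₀ ∧ ‖G₁ x - G₂ x‖ ≤ η₁ ∧ ‖D₁ x - D₂ x‖ ≤ η₂)
    -- (C1): nontrivial critical points of f₁ and f₂ are in H¹₀:
    (hC1 : ∀ x : L2, (G₁ x = 0 ∧ 0 < f₁ x) ∨ (G₂ x = 0 ∧ 0 < f₂ x) → MemH10 x)
    -- (C2): the gradient flows have global H¹₀ solutions with L²-convergent subsequences:
    (hC2 : ∀ x₀ : L2, MemH10 x₀ →
      (∃ γ : ℝ → L2, γ 0 = x₀ ∧ (∀ t : ℝ, 0 ≤ t → MemH10 (γ t)) ∧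
        (∀ t : ℝ, 0 ≤ t → HasDerivWithinAt γ (G₁ (γ t)) (Set.Ici 0) t) ∧
        ∃ (y : L2) (tk : ℕ → ℝ), StrictMono tk ∧ (∀ k, 0 ≤ tk k) ∧
          Filter.Tendsto tk Filter.atTop Filter.atTop ∧
          Filter.Tendsto (fun k => γ (tk k)) Filter.atTop (nhds y)) ∧
      (∃ γ : ℝ → L2, γ 0 = x₀ ∧ (∀ t : ℝ, 0 ≤ t → MemH10 (γ t)) ∧
        (∀ t : ℝ, 0 ≤ t → HasDerivWithinAt γ (G₂ (γ t)) (Set.Ici 0) t) ∧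
        ∃ (y : L2) (tk : ℕ → ℝ), StrictMono tk ∧ (∀ k, 0 ≤ tk k) ∧
          Filter.Tendsto tk Filter.atTop Filter.atTop ∧
          Filter.Tendsto (fun k => γ (tk k)) Filter.atTop (nhds y)))
    -- x₂* is a nondegenerate local maximum of f₂ with ‖x₂*‖_{H¹₀} < M:
    (x₂ x₂' : L2) (hx₂ : IsWeakDeriv x₂' x₂) (hx₂M : ‖x₂'‖ < M)
    (hx₂crit : G₂ x₂ = 0) (hx₂max : IsLocalMax f₂ x₂)
    (hx₂sym : ∀ v w : L2, ⟪D₂ x₂ v, w⟫_ℝ = ⟪v, D₂ x₂ w⟫_ℝ)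
    (hx₂negdef : ∀ v : L2, v ≠ 0 → ⟪D₂ x₂ v, v⟫_ℝ < 0)
    (hx₂iso : ∃ T : L2 ≃L[ℝ] L2, (T : L2 →L[ℝ] L2) = D₂ x₂)
    -- δ = −sup_{‖u‖=1} D²f₂(x₂*)(u,u):
    (δ : ℝ) (hδdef : δ = -(⨆ u : {u : L2 // ‖u‖ = 1}, ⟪D₂ x₂ u.1, u.1⟫_ℝ))
    (hη₁ : η₁ ≤ δ ^ 2 / (8 * β₃)) (hη₂ : η₂ ≤ δ / 8) :
    ∃ x₁ : L2, x₁ ∈ Metric.ball x₂ (δ / (2 * β₃)) ∧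
      G₁ x₁ = 0 ∧ IsLocalMax f₁ x₁ ∧
      (∀ y : L2, y ∈ Metric.ball x₂ (δ / (2 * β₃)) → G₁ y = 0 → IsLocalMax f₁ y → y = x₁) ∧
      (∀ u : L2, ‖u‖ = 1 → ⟪D₁ x₁ u, u⟫_ℝ ≤ -(3 * δ / 8)) ∧
      ‖x₁ - x₂‖ ≤ 8 * η₁ / δ := by
  classical
  set r : ℝ := δ / (2 * β₃) with hrdef
  set m : ℝ := 3 * δ / 8 with hmdef
  obtain ⟨u₀, hu₀⟩ := exists_unit
  haveI : Nonempty {u : L2 // ‖u‖ = 1} := ⟨⟨u₀, hu₀⟩⟩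
  -- the sup is bounded above
  have hBdd : BddAbove (Set.range fun u : {u : L2 // ‖u‖ = 1} => ⟪D₂ x₂ u.1, u.1⟫_ℝ) := by
    refine ⟨β₂, ?_⟩
    rintro y ⟨u, rfl⟩
    have h1 := real_inner_le_norm (D₂ x₂ u.1) u.1
    have h2 := (D₂ x₂).le_opNorm u.1
    have h3 := (hβ₂ x₂).2
    rw [u.2, mul_one] at h1 h2
    linarith
  obtain ⟨ε, hε, hgap⟩ := negdef_gap (D₂ x₂) β₂ (hβ₂ x₂).2 hx₂sym hx₂negdef hx₂iso
  have hδpos : 0 < δ := by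
    have hsup : (⨆ u : {u : L2 // ‖u‖ = 1}, ⟪D₂ x₂ u.1, u.1⟫_ℝ) ≤ -ε :=
      ciSup_le fun u => hgap u.1 u.2
    rw [hδdef]; linarith
  have hδle : ∀ u : L2, ‖u‖ = 1 → ⟪D₂ x₂ u, u⟫_ℝ ≤ -δ := by
    intro u hu
    have := le_ciSup hBdd (⟨u, hu⟩ : {u : L2 // ‖u‖ = 1})
    rw [hδdef]; simpa using this
  have hD₂neg : ∀ v : L2, ⟪D₂ x₂ v, v⟫_ℝ ≤ -δ * ‖v‖ ^ 2 := by
    intro v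
    rcases eq_or_ne v 0 with h | h
    · simp [h]
    · have hv : 0 < ‖v‖ := norm_pos_iff.mpr h
      have h1 := hδle (‖v‖⁻¹ • v) (norm_smul_inv_norm h)
      rw [(D₂ x₂).map_smul, real_inner_smul_left, real_inner_smul_right] at h1
      have h2 : ‖v‖⁻¹ * (‖v‖⁻¹ * ⟪D₂ x₂ v, v⟫_ℝ) ≤ -δ := by simpa using h1
      have h3 := mul_le_mul_of_nonneg_left h2 (by positivity : (0:ℝ) ≤ ‖v‖ ^ 2)
      calc ⟪D₂ x₂ v, v⟫_ℝ = ‖v‖ ^ 2 * (‖v‖⁻¹ * (‖v‖⁻¹ * ⟪D₂ x₂ v, v⟫_ℝ)) := by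
            field_simp
        _ ≤ ‖v‖ ^ 2 * (-δ) := h3
        _ = -δ * ‖v‖ ^ 2 := by ring
  have hδβ₂ : δ ≤ β₂ := by
    have h1 := hδle u₀ hu₀
    have habs := abs_real_inner_le_norm (D₂ x₂ u₀) u₀
    have h2 := (D₂ x₂).le_opNorm u₀
    have h3 := (hβ₂ x₂).2
    rw [hu₀, mul_one] at habs h2
    have h4 := neg_le_abs ⟪D₂ x₂ u₀, u₀⟫_ℝ
    linarith
  have hβ₂pos : 0 < β₂ := lt_of_lt_of_le hδpos hδβ₂
  have hm0 : 0 < m := by rw [hmdef]; linarith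
  have hmβ₂ : m ≤ β₂ := by rw [hmdef]; linarith
  -- Lipschitz bounds
  have hG₁lip : ∀ x y : L2, ‖G₁ x - G₁ y‖ ≤ β₂ * ‖x - y‖ := by
    intro x y
    exact Convex.norm_image_sub_le_of_norm_hasFDerivWithin_le
      (fun z _ => (hD₁ z).hasFDerivWithinAt) (fun z _ => (hβ₂ z).1)
      convex_univ (Set.mem_univ y) (Set.mem_univ x)
  have hD₁lip : ∀ x y : L2, ‖D₁ x - D₁ y‖ ≤ β₃ * ‖x - y‖ := by
    intro x y
    exact Convex.norm_image_sub_le_of_norm_hasFDerivWithin_le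
      (fun z _ => (hD₁₃ z).hasFDerivWithinAt) (fun z _ => (hβ₃b z).1)
      convex_univ (Set.mem_univ y) (Set.mem_univ x)
  -- discrepancy at x₂
  obtain ⟨-, hGx₂', hDx₂⟩ := hη x₂ x₂' hx₂ hx₂M.le
  have hGx₂ : ‖G₁ x₂‖ ≤ η₁ := by rwa [hx₂crit, sub_zero] at hGx₂'
  have hη₁0 : 0 ≤ η₁ := le_trans (norm_nonneg _) hGx₂
  have hη₂0 : 0 ≤ η₂ := le_trans (norm_nonneg _) hDx₂
  have hr0 : 0 < r := by rw [hrdef]; positivity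
  -- pointwise negativity of D₁ on the closed ball
  have hneg : ∀ x ∈ Metric.closedBall x₂ r, ∀ v : L2, ⟪D₁ x v, v⟫_ℝ ≤ -m * ‖v‖ ^ 2 := by
    intro x hx v
    have hdist : ‖x - x₂‖ ≤ r := by rwa [Metric.mem_closedBall, dist_eq_norm] at hx
    have hop : ‖D₁ x - D₂ x₂‖ ≤ 5 * δ / 8 := by
      calc ‖D₁ x - D₂ x₂‖ = ‖(D₁ x - D₁ x₂) + (D₁ x₂ - D₂ x₂)‖ := by congr 1; abel
        _ ≤ ‖D₁ x - D₁ x₂‖ + ‖D₁ x₂ - D₂ x₂‖ := norm_add_le _ _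
        _ ≤ β₃ * r + η₂ := by gcongr; · calc ‖D₁ x - D₁ x₂‖ ≤ β₃ * ‖x - x₂‖ := hD₁lip x x₂
                                          _ ≤ β₃ * r := by gcongr
        _ ≤ δ / 2 + δ / 8 := by
            have hβ₃r : β₃ * r = δ / 2 := by
              rw [hrdef]; field_simp
            rw [hβ₃r]; linarith
        _ = 5 * δ / 8 := by ring
    have hsplit : ⟪D₁ x v, v⟫_ℝ = ⟪D₂ x₂ v, v⟫_ℝ + ⟪(D₁ x - D₂ x₂) v, v⟫_ℝ := by
      simp [ContinuousLinearMap.sub_apply, inner_sub_left]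
    have hpert : ⟪(D₁ x - D₂ x₂) v, v⟫_ℝ ≤ (5 * δ / 8) * ‖v‖ ^ 2 := by
      calc ⟪(D₁ x - D₂ x₂) v, v⟫_ℝ ≤ ‖(D₁ x - D₂ x₂) v‖ * ‖v‖ := real_inner_le_norm _ _
        _ ≤ (‖D₁ x - D₂ x₂‖ * ‖v‖) * ‖v‖ := by gcongr; exact (D₁ x - D₂ x₂).le_opNorm _
        _ ≤ ((5 * δ / 8) * ‖v‖) * ‖v‖ := by gcongr
        _ = (5 * δ / 8) * ‖v‖ ^ 2 := by ring
    rw [hsplit, hmdef]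
    have := hD₂neg v
    nlinarith [sq_nonneg ‖v‖]
  have hmono := grad_mono G₁ D₁ hD₁ (Metric.closedBall x₂ r) (convex_closedBall _ _) m hneg
  -- Banach fixed point setup
  set t : ℝ := m / (2 * β₂ ^ 2) with htdef
  have ht : 0 < t := by rw [htdef]; positivity
  set q : ℝ := Real.sqrt (1 - 3 * m ^ 2 / (4 * β₂ ^ 2)) with hqdef
  have hqarg : 0 ≤ 1 - 3 * m ^ 2 / (4 * β₂ ^ 2) := by
    rw [sub_nonneg, div_le_one (by positivity)]
    nlinarith
  have hq2 : q ^ 2 = 1 - 3 * m ^ 2 / (4 * β₂ ^ 2) := Real.sq_sqrt hqarg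
  have hq0 : 0 ≤ q := Real.sqrt_nonneg _
  have hq1 : q < 1 := by
    nlinarith [div_pos (by positivity : (0:ℝ) < 3 * m ^ 2) (by positivity : (0:ℝ) < 4 * β₂ ^ 2)]
  have hcontr : ∀ x ∈ Metric.closedBall x₂ r, ∀ y ∈ Metric.closedBall x₂ r,
      ‖(x + t • G₁ x) - (y + t • G₁ y)‖ ≤ q * ‖x - y‖ := by
    intro x hx y hy
    have hre : (x + t • G₁ x) - (y + t • G₁ y) = (x - y) + t • (G₁ x - G₁ y) := by
      rw [smul_sub]; abel
    have hsq : ‖(x - y) + t • (G₁ x - G₁ y)‖ ^ 2 ≤ q ^ 2 * ‖x - y‖ ^ 2 := by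
      rw [norm_add_sq_real, norm_smul, real_inner_smul_right]
      have h1 : ⟪x - y, G₁ x - G₁ y⟫_ℝ ≤ -m * ‖x - y‖ ^ 2 := by
        have h1' := hmono x y hx hy
        rwa [real_inner_comm] at h1'
      have h2 : ‖G₁ x - G₁ y‖ ≤ β₂ * ‖x - y‖ := hG₁lip x y
      have h3 : (‖t‖ * ‖G₁ x - G₁ y‖) ^ 2 ≤ t ^ 2 * (β₂ * ‖x - y‖) ^ 2 := by
        rw [Real.norm_eq_abs, abs_of_pos ht, mul_pow]
        gcongr
      have hq2' : q ^ 2 * ‖x - y‖ ^ 2 =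
          ‖x - y‖ ^ 2 + 2 * t * (-m * ‖x - y‖ ^ 2) + t ^ 2 * (β₂ * ‖x - y‖) ^ 2 := by
        rw [hq2, htdef]; field_simp; ring
      rw [hq2']
      nlinarith [mul_le_mul_of_nonneg_left h1 (le_of_lt (by positivity : (0:ℝ) < 2 * t))]
    rw [hre]
    have hnn : 0 ≤ q * ‖x - y‖ := by positivity
    nlinarith [norm_nonneg ((x - y) + t • (G₁ x - G₁ y))]
  have hself : q * r + t * ‖G₁ x₂‖ ≤ r := by
    have h1q : 3 * m ^ 2 / (8 * β₂ ^ 2) ≤ 1 - q := by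
      have hsq := sq_nonneg (q - 1)
      have h48 : 3 * m ^ 2 / (8 * β₂ ^ 2) = (3 * m ^ 2 / (4 * β₂ ^ 2)) / 2 := by ring
      rw [h48]
      nlinarith [hq2]
    have htη : t * ‖G₁ x₂‖ ≤ t * η₁ := by gcongr
    have hkey : t * η₁ ≤ (3 * m ^ 2 / (8 * β₂ ^ 2)) * r := by
      have h8 : η₁ * (8 * β₃) ≤ δ ^ 2 := (le_div_iff₀ (by positivity)).mp hη₁
      have hb2 : (0:ℝ) < β₂ ^ 2 := by positivity
      have e1 : t * η₁ = (m * η₁) / (2 * β₂ ^ 2) := by rw [htdef]; ring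
      have e2 : (3 * m ^ 2 / (8 * β₂ ^ 2)) * r = (3 * m ^ 2 * δ) / (16 * β₂ ^ 2 * β₃) := by
        rw [hrdef]; field_simp; ring
      rw [e1, e2, div_le_div_iff₀ (by positivity) (by positivity), hmdef]
      nlinarith [mul_le_mul_of_nonneg_left h8 (le_of_lt (mul_pos hδpos hb2)),
        mul_pos (mul_pos hδpos (mul_pos hδpos hδpos)) hb2]
    have : t * ‖G₁ x₂‖ ≤ (1 - q) * r := by
      calc t * ‖G₁ x₂‖ ≤ t * η₁ := htη
        _ ≤ (3 * m ^ 2 / (8 * β₂ ^ 2)) * r := hkey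
        _ ≤ (1 - q) * r := by gcongr
    nlinarith
  obtain ⟨x₁, hx₁mem, hx₁crit⟩ :=
    fixed_point_exists G₁ x₂ r t q hr0.le ht hq1 hq0 hcontr hself
  -- distance bound
  have hquant : m * ‖x₁ - x₂‖ ^ 2 ≤ η₁ * ‖x₁ - x₂‖ := by
    have h1 := hmono x₁ x₂ hx₁mem (Metric.mem_closedBall_self hr0.le)
    rw [hx₁crit, zero_sub, inner_neg_left] at h1
    have h2 : ⟪G₁ x₂, x₁ - x₂⟫_ℝ ≤ ‖G₁ x₂‖ * ‖x₁ - x₂‖ := real_inner_le_norm _ _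
    have h3 : ‖G₁ x₂‖ * ‖x₁ - x₂‖ ≤ η₁ * ‖x₁ - x₂‖ := by gcongr
    nlinarith
  have hdbound : ‖x₁ - x₂‖ ≤ 8 * η₁ / (3 * δ) := by
    rcases eq_or_lt_of_le (norm_nonneg (x₁ - x₂)) with h | h
    · rw [← h]; positivity
    · have h1 : m * ‖x₁ - x₂‖ ≤ η₁ := by
        have := hquant
        nlinarith
      rw [hmdef] at h1
      rw [le_div_iff₀ (by positivity)]
      linarith
  have hdfinal : ‖x₁ - x₂‖ ≤ 8 * η₁ / δ := by
    calc ‖x₁ - x₂‖ ≤ 8 * η₁ / (3 * δ) := hdbound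
      _ ≤ 8 * η₁ / δ := by
          apply div_le_div_of_nonneg_left (by linarith) hδpos
          linarith
  have hball : x₁ ∈ Metric.ball x₂ r := by
    rw [Metric.mem_ball, dist_eq_norm]
    calc ‖x₁ - x₂‖ ≤ 8 * η₁ / (3 * δ) := hdbound
      _ ≤ 8 * (δ ^ 2 / (8 * β₃)) / (3 * δ) := by gcongr
      _ = δ / (3 * β₃) := by field_simp
      _ < r := by
          rw [hrdef, div_lt_div_iff₀ (by positivity) (by positivity)]
          nlinarith
  -- local maximality on the closed ball
  have hfmax : ∀ x ∈ Metric.closedBall x₂ r, f₁ x ≤ f₁ x₁ := by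
    apply concave_max f₁ G₁ hG₁ _ (convex_closedBall _ _) _ x₁ hx₁mem hx₁crit
    intro x hx y hy
    have := hmono x y hx hy
    nlinarith [sq_nonneg ‖x - y‖]
  refine ⟨x₁, hball, hx₁crit, ?_, ?_, ?_, hdfinal⟩
  · -- IsLocalMax
    refine Filter.eventually_of_mem (Metric.isOpen_ball.mem_nhds hball) ?_
    intro x hx
    exact hfmax x (Metric.ball_subset_closedBall hx)
  · -- uniqueness
    intro y hy hycrit _
    have h1 := hmono y x₁ (Metric.ball_subset_closedBall hy) hx₁mem
    rw [hycrit, hx₁crit, sub_zero] at h1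
    simp only [inner_zero_left] at h1
    have h2 : ‖y - x₁‖ ^ 2 ≤ 0 := by nlinarith
    have h3 : y - x₁ = 0 := by
      have := sq_nonneg ‖y - x₁‖
      have h4 : ‖y - x₁‖ = 0 := by nlinarith
      exact norm_eq_zero.mp h4
    exact sub_eq_zero.mp h3
  · -- second derivative bound
    intro u hu
    have := hneg x₁ hx₁mem u
    rw [hu] at this
    rw [hmdef] at this
    simpa using this



end
end

section
/- Let p : L² → [0,∞) be continuous with respect to the L² norm and suppose that p(x) → 0 as ‖x‖_{H¹₀} → ∞, i.e. for every ε > 0 there exists R > 0 such that every x ∈ H¹₀ with ‖x‖_{H¹₀} ≥ R satisfies p(x) ≤ ε. Then p(y) = 0 for every y ∈ H¹₀. -/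
open MeasureTheory ProbabilityTheory Real Set Filter
open scoped InnerProductSpace ENNReal NNReal Topology

noncomputable section

instance inst_s16 : IsProbabilityMeasure μ01 := by
  constructor
  simp [μ01, Real.volume_Icc]

lemma mem_Icc_ae : ∀ᵐ t ∂μ01, t ∈ Set.Icc (0:ℝ) 1 :=
  ae_restrict_mem measurableSet_Icc

lemma setint_congr {g₁ g₂ : ℝ → ℝ} (h : g₁ =ᵐ[μ01] g₂) {t : ℝ} (ht : t ∈ Set.Icc (0:ℝ) 1) :
    ∫ s in Set.Ioc (0:ℝ) t, g₁ s = ∫ s in Set.Ioc (0:ℝ) t, g₂ s := by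
  apply integral_congr_ae
  have hsub : Set.Ioc (0:ℝ) t ⊆ Set.Icc 0 1 := fun s hs => ⟨le_of_lt hs.1, le_trans hs.2 ht.2⟩
  exact ae_restrict_of_ae_restrict_of_subset hsub h

lemma integrable_Ioc (x : L2) {t : ℝ} (ht : t ∈ Set.Icc (0:ℝ) 1) :
    IntegrableOn (x : ℝ → ℝ) (Set.Ioc (0:ℝ) t) volume := by
  have h1 : Integrable (x : ℝ → ℝ) μ01 :=
    (Lp.memLp x).integrable (by norm_num)
  have hsub : Set.Ioc (0:ℝ) t ⊆ Set.Icc 0 1 := fun s hs => ⟨le_of_lt hs.1, le_trans hs.2 ht.2⟩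
  exact h1.mono_measure (Measure.restrict_mono hsub le_rfl)

lemma isWeakDeriv_add {x' x g' g : L2} (hx : IsWeakDeriv x' x) (hg : IsWeakDeriv g' g) :
    IsWeakDeriv (x' + g') (x + g) := by
  filter_upwards [hx, hg, Lp.coeFn_add x g, mem_Icc_ae] with t hxt hgt haddt htIcc
  rw [haddt, setint_congr (Lp.coeFn_add x' g') htIcc]
  simp only [Pi.add_apply]
  rw [integral_add (integrable_Ioc x' htIcc) (integrable_Ioc g' htIcc), hxt, hgt]

section Construction

variable (c : ℝ) (n : ℕ)

/-- amplitude `c`, frequency `a = 2πn`. -/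
def sinf (c a : ℝ) : ℝ → ℝ := fun t => c * Real.sin (a * t)
def cosf (c a : ℝ) : ℝ → ℝ := fun t => c * a * Real.cos (a * t)

lemma sinf_hasDerivAt (c a u : ℝ) : HasDerivAt (sinf c a) (cosf c a u) u := by
  have h1 : HasDerivAt (fun t : ℝ => a * t) a u := by
    simpa using (hasDerivAt_id u).const_mul a
  have h2 := (Real.hasDerivAt_sin (a * u)).comp u h1
  have h3 := h2.const_mul c
  refine h3.congr_deriv ?_
  simp [cosf]; ring

lemma sinf_cont (c a : ℝ) : Continuous (sinf c a) := by
  unfold sinf; fun_prop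

lemma cosf_cont (c a : ℝ) : Continuous (cosf c a) := by
  unfold cosf; fun_prop

lemma sinf_memℒp (c a : ℝ) : MemLp (sinf c a) 2 μ01 :=
  (memLp_top_of_bound (sinf_cont c a).aestronglyMeasurable |c|
    (Filter.Eventually.of_forall fun t => by
      simp only [sinf, Real.norm_eq_abs, abs_mul]
      exact mul_le_of_le_one_right (abs_nonneg c) (Real.abs_sin_le_one _)
      )).mono_exponent le_top

lemma cosf_memℒp (c a : ℝ) : MemLp (cosf c a) 2 μ01 :=
  (memLp_top_of_bound (cosf_cont c a).aestronglyMeasurable |c * a|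
    (Filter.Eventually.of_forall fun t => by
      show ‖c * a * Real.cos (a * t)‖ ≤ |c * a|
      rw [Real.norm_eq_abs, abs_mul]
      exact mul_le_of_le_one_right (abs_nonneg _) (Real.abs_cos_le_one _))).mono_exponent le_top

lemma sinf_weakDeriv (c a : ℝ) :
    IsWeakDeriv ((cosf_memℒp c a).toLp _) ((sinf_memℒp c a).toLp _) := by
  filter_upwards [(sinf_memℒp c a).coeFn_toLp, mem_Icc_ae] with t hst htIcc
  rw [hst, setint_congr (cosf_memℒp c a).coeFn_toLp htIcc,
    ← intervalIntegral.integral_of_le htIcc.1]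
  have := intervalIntegral.integral_eq_sub_of_hasDerivAt
    (f := sinf c a) (f' := cosf c a) (a := 0) (b := t)
    (fun x _ => sinf_hasDerivAt c a x) ((cosf_cont c a).intervalIntegrable 0 t)
  rw [this]
  simp [sinf]

lemma sinf_norm_le (c a : ℝ) (hc : 0 ≤ c) : ‖(sinf_memℒp c a).toLp _‖ ≤ c := by
  rw [Lp.norm_toLp]
  apply ENNReal.toReal_le_of_le_ofReal hc
  have h := eLpNorm_le_of_ae_bound (μ := μ01) (p := 2) (f := sinf c a) (C := c)
    (Filter.Eventually.of_forall fun t => by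
      simp only [sinf, Real.norm_eq_abs, abs_mul]
      calc |c| * |Real.sin (a*t)| ≤ |c| * 1 :=
        mul_le_mul_of_nonneg_left (Real.abs_sin_le_one _) (abs_nonneg c)
      _ = c := by rw [mul_one, abs_of_nonneg hc])
  simpa using h

lemma cosf_norm_sq (c : ℝ) (n : ℕ) :
    ‖(cosf_memℒp c (2 * π * n)).toLp _‖ ^ 2 = c ^ 2 * (2 * π * n) ^ 2 / 2 := by
  set a : ℝ := 2 * π * n with ha
  set g' : L2 := (cosf_memℒp c a).toLp _ with hg'
  have h1 : ‖g'‖ ^ 2 = ∫ t, (cosf c a t) ^ 2 ∂μ01 := by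
    rw [← real_inner_self_eq_norm_sq, L2.inner_def]
    apply integral_congr_ae
    filter_upwards [(cosf_memℒp c a).coeFn_toLp] with t ht
    rw [ht]; simp [RCLike.inner_apply]
  rw [h1]
  have h2 : (∫ t, (cosf c a t) ^ 2 ∂μ01) = ∫ t in (0:ℝ)..1, (cosf c a t) ^ 2 := by
    rw [μ01, intervalIntegral.integral_of_le zero_le_one, ← integral_Icc_eq_integral_Ioc]
  rw [h2]
  -- antiderivative
  have key : ∀ u : ℝ, HasDerivAt (fun t => c^2*a^2*(t/2 + Real.sin (2*a*t)/(4*a)))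
      ((cosf c a u)^2) u := by
    intro u
    by_cases han : a = 0
    · simp only [han, cosf, mul_zero, zero_mul, ne_eq, OfNat.ofNat_ne_zero,
        not_false_eq_true, zero_pow]
      simpa using hasDerivAt_const u (0:ℝ)
    have hsin : HasDerivAt (fun t : ℝ => Real.sin (2*a*t)) (2*a*Real.cos (2*a*u)) u := by
      have h1 : HasDerivAt (fun t : ℝ => 2*a*t) (2*a) u := by
        simpa using (hasDerivAt_id u).const_mul (2*a)
      simpa [Function.comp_def, mul_comm] using (Real.hasDerivAt_sin (2*a*u)).comp u h1
    have h3 : HasDerivAt (fun t : ℝ => t/2 + Real.sin (2*a*t)/(4*a))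
        (1/2 + (2*a*Real.cos (2*a*u))/(4*a)) u :=
      ((hasDerivAt_id u).div_const 2).add (hsin.div_const (4*a))
    have h4 := h3.const_mul (c^2*a^2)
    refine h4.congr_deriv ?_
    symm
    have : (2*a*Real.cos (2*a*u))/(4*a) = Real.cos (2*(a*u))/2 := by
      rw [show (2:ℝ)*a*u = 2*(a*u) by ring]
      field_simp
      try ring
    rw [this]
    simp only [cosf]
    rw [mul_pow, mul_pow, Real.cos_sq (a*u)]
    try ring
  rw [intervalIntegral.integral_eq_sub_of_hasDerivAt (fun x _ => key x)
    (Continuous.intervalIntegrable (by unfold cosf; fun_prop) 0 1)]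
  have hsin0 : Real.sin (2*a*1) = 0 := by
    have : 2*a*1 = ((4*n : ℕ) : ℝ) * π := by push_cast [ha]; ring
    rw [this, Real.sin_nat_mul_pi]
  rw [hsin0]
  simp
  try ring

end Construction

lemma exists_perturb (c M : ℝ) (hc : 0 < c) (hM : 0 ≤ M) :
    ∃ g g' : L2, IsWeakDeriv g' g ∧ ‖g‖ ≤ c ∧ M ≤ ‖g'‖ := by
  obtain ⟨n, hn⟩ : ∃ n : ℕ, M / c ≤ n := exists_nat_ge (M / c)
  set a : ℝ := 2 * π * (n : ℝ) with ha
  refine ⟨(sinf_memℒp c a).toLp _, (cosf_memℒp c a).toLp _, sinf_weakDeriv c a,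
    sinf_norm_le c a hc.le, ?_⟩
  set g' : L2 := (cosf_memℒp c a).toLp _ with hg'def
  have hsq : ‖g'‖ ^ 2 = c ^ 2 * a ^ 2 / 2 := cosf_norm_sq c n
  have h1 : M ≤ (n : ℝ) * c := (div_le_iff₀ hc).mp hn
  have hπ : (3:ℝ) ≤ π := Real.pi_gt_three.le
  have hn0 : (0:ℝ) ≤ n := n.cast_nonneg
  have h2 : 2 * M ≤ c * a := by
    rw [ha]; nlinarith
  have h3 : M ^ 2 ≤ ‖g'‖ ^ 2 := by rw [hsq]; nlinarith
  nlinarith [norm_nonneg g']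

/-- If `p : L² → [0,∞)` is `L²`-continuous and `p(x) → 0` as
`‖x‖_{H¹₀} → ∞`, then `p` vanishes identically on `H¹₀`. -/
theorem statement16
    (p : L2 → ℝ)
    (hpnonneg : ∀ x : L2, 0 ≤ p x)
    (hpcont : Continuous p)
    (hvanish : ∀ ε : ℝ, 0 < ε → ∃ R : ℝ, 0 < R ∧
      ∀ x x' : L2, IsWeakDeriv x' x → R ≤ ‖x'‖ → p x ≤ ε) :
    ∀ y y' : L2, IsWeakDeriv y' y → p y = 0 := by
  intro y y' hy
  have key : ∀ ε : ℝ, 0 < ε → p y ≤ 2 * ε := by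
    intro ε hε
    obtain ⟨R, hR, hRle⟩ := hvanish ε hε
    obtain ⟨δ, hδ, hcont⟩ := Metric.continuous_iff.mp hpcont y ε hε
    obtain ⟨g, g', hg, hgle, hg'ge⟩ :=
      exists_perturb (δ/2) (R + ‖y'‖) (by linarith) (by positivity)
    have hsum := isWeakDeriv_add hy hg
    have hnorm : R ≤ ‖y' + g'‖ := by
      have h : ‖g'‖ ≤ ‖y' + g'‖ + ‖y'‖ := by
        calc ‖g'‖ = ‖(y' + g') - y'‖ := by rw [add_sub_cancel_left]
        _ ≤ ‖y' + g'‖ + ‖y'‖ := norm_sub_le _ _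
      linarith
    have hle := hRle (y + g) (y' + g') hsum hnorm
    have hdist : dist (y + g) y < δ := by
      rw [dist_eq_norm, add_sub_cancel_left]; linarith
    have habs := hcont (y + g) hdist
    rw [Real.dist_eq, abs_lt] at habs
    linarith [habs.1]
  have h0 : p y ≤ 0 := by
    by_contra h
    push_neg at h
    have := key (p y / 4) (by linarith)
    linarith
  exact le_antisymm h0 (hpnonneg y)


end
end

section
/- Assume (H1), (H2) and (H3), let X₁,…,X_n be i.i.d. with law P, and let p̂_h(x) = n⁻¹ Σᵢ K_h(‖Xᵢ − x‖²_{L²}). Then there is an absolute constant C (from the covering-number bound N_ε ≤ C·exp(M/ε) for the H¹₀ ball of radius M under the L² metric) such that for all sufficiently small ε > 0 and every M > 0, P( sup_{x ∈ B_{H¹₀}(0,M)} |p̂_h(x) − p_h(x)| ≥ ε ) ≤ C·exp( −32nε²/(25K₀²) + 10MK₁/ε ). -/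
open MeasureTheory ProbabilityTheory Real Set Filter
open scoped InnerProductSpace ENNReal NNReal Topology

noncomputable section

/-- The empirical pseudo-density `p̂_h(x) = n⁻¹ Σᵢ K_h(‖Xᵢ − x‖²)`. -/
def empPseudoDensity {Ω' : Type*} (Xs : ℕ → Ω' → L2) (K : ℝ → ℝ) (h : ℝ)
    (n : ℕ) (ω : Ω') (x : L2) : ℝ :=
  (n : ℝ)⁻¹ * ∑ i ∈ Finset.range n, Kh K h (‖Xs i ω - x‖ ^ 2)


/-- Core analytic inequality for Hoeffding's lemma. -/
lemma hoeff_core {p : ℝ} (hp0 : 0 ≤ p) (hp1 : p ≤ 1) (u : ℝ) :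
    Real.exp (-(p * u)) * (1 - p + p * Real.exp u) ≤ Real.exp (u ^ 2 / 8) := by
  have hφpos : ∀ v : ℝ, 0 < 1 - p + p * Real.exp v := by
    intro v
    rcases le_total (Real.exp v) 1 with hv | hv
    · nlinarith [Real.exp_pos v, mul_nonneg (by linarith : (0:ℝ) ≤ 1 - p) (by linarith : (0:ℝ) ≤ 1 - Real.exp v)]
    · nlinarith [mul_nonneg hp0 (by linarith : (0:ℝ) ≤ Real.exp v - 1)]
  set g : ℝ → ℝ := fun v => v ^ 2 / 8 + p * v - Real.log (1 - p + p * Real.exp v) with hg_def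
  set g' : ℝ → ℝ := fun v => v / 4 + p - p * Real.exp v / (1 - p + p * Real.exp v) with hg'_def
  have hφ : ∀ v : ℝ, HasDerivAt (fun v => 1 - p + p * Real.exp v) (p * Real.exp v) v := by
    intro v
    simpa using ((Real.hasDerivAt_exp v).const_mul p).const_add (1 - p)
  have hg : ∀ v, HasDerivAt g (g' v) v := by
    intro v
    have h1 : HasDerivAt (fun v : ℝ => v ^ 2 / 8 + p * v)
        (v / 4 + p) v := by
      have := ((hasDerivAt_pow 2 v).div_const 8).add ((hasDerivAt_id v).const_mul p)
      exact this.congr_deriv (by rw [show (2:ℕ) - 1 = 1 from rfl]; ring)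
    have h2 : HasDerivAt (fun v => Real.log (1 - p + p * Real.exp v))
        (p * Real.exp v / (1 - p + p * Real.exp v)) v :=
      (hφ v).log (hφpos v).ne'
    exact h1.sub h2
  have hg' : ∀ v, HasDerivAt g'
      (1 / 4 - p * Real.exp v * (1 - p) / (1 - p + p * Real.exp v) ^ 2) v := by
    intro v
    have h1 : HasDerivAt (fun v : ℝ => v / 4 + p) (1 / 4) v := by
      simpa using ((hasDerivAt_id v).div_const 4).add_const p
    have h2 : HasDerivAt (fun v => p * Real.exp v / (1 - p + p * Real.exp v))
        ((p * Real.exp v * (1 - p + p * Real.exp v) - p * Real.exp v * (p * Real.exp v)) /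
          (1 - p + p * Real.exp v) ^ 2) v :=
      ((Real.hasDerivAt_exp v).const_mul p).div (hφ v) (hφpos v).ne'
    have := h1.sub h2
    have hφne := (hφpos v).ne'
    exact this.congr_deriv (by field_simp; ring)
  have hg'nonneg : ∀ v : ℝ, 0 ≤ v → 0 ≤ g' v := by
    have hmono : Monotone g' := by
      apply monotone_of_hasDerivAt_nonneg hg'
      intro v
      have h4 : 4 * (p * Real.exp v * (1 - p)) ≤ (1 - p + p * Real.exp v) ^ 2 := by
        nlinarith [sq_nonneg ((1 - p) - p * Real.exp v)]
      have hsq : (0:ℝ) < (1 - p + p * Real.exp v) ^ 2 := pow_pos (hφpos v) 2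
      have : p * Real.exp v * (1 - p) / (1 - p + p * Real.exp v) ^ 2 ≤ 1 / 4 := by
        rw [div_le_iff₀ hsq]; nlinarith
      simp only [Pi.zero_apply]
      linarith
    intro v hv
    have h0 : g' 0 = 0 := by
      simp [hg'_def]
    calc (0:ℝ) = g' 0 := h0.symm
    _ ≤ g' v := hmono hv
  have hg'nonpos : ∀ v : ℝ, v ≤ 0 → g' v ≤ 0 := by
    have hmono : Monotone g' := by
      apply monotone_of_hasDerivAt_nonneg hg'
      intro v
      have h4 : 4 * (p * Real.exp v * (1 - p)) ≤ (1 - p + p * Real.exp v) ^ 2 := by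
        nlinarith [sq_nonneg ((1 - p) - p * Real.exp v)]
      have hsq : (0:ℝ) < (1 - p + p * Real.exp v) ^ 2 := pow_pos (hφpos v) 2
      have : p * Real.exp v * (1 - p) / (1 - p + p * Real.exp v) ^ 2 ≤ 1 / 4 := by
        rw [div_le_iff₀ hsq]; nlinarith
      simp only [Pi.zero_apply]
      linarith
    intro v hv
    have h0 : g' 0 = 0 := by simp [hg'_def]
    calc g' v ≤ g' 0 := hmono hv
    _ = 0 := h0
  have hgnonneg : 0 ≤ g u := by
    have hg0 : g 0 = 0 := by simp [hg_def]
    rcases le_total 0 u with hu | hu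
    · have hmono : MonotoneOn g (Set.Ici 0) := by
        apply monotoneOn_of_deriv_nonneg (convex_Ici 0)
        · exact (Differentiable.continuous (fun v => (hg v).differentiableAt)).continuousOn
        · exact fun v _ => ((hg v).differentiableAt).differentiableWithinAt
        · intro v hv
          rw [(hg v).deriv]
          exact hg'nonneg v (le_of_lt (by simpa using hv))
      have := hmono (Set.self_mem_Ici) (by exact hu) hu
      linarith [hg0 ▸ this]
    · have hmono : AntitoneOn g (Set.Iic 0) := by
        apply antitoneOn_of_deriv_nonpos (convex_Iic 0)
        · exact (Differentiable.continuous (fun v => (hg v).differentiableAt)).continuousOn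
        · exact fun v _ => ((hg v).differentiableAt).differentiableWithinAt
        · intro v hv
          rw [(hg v).deriv]
          exact hg'nonpos v (le_of_lt (by simpa using hv))
      have := hmono (by exact hu) (Set.self_mem_Iic) hu
      linarith [hg0 ▸ this]
  -- convert
  have hlog : -(p * u) + Real.log (1 - p + p * Real.exp u) ≤ u ^ 2 / 8 := by
    simp only [hg_def] at hgnonneg
    linarith
  calc Real.exp (-(p * u)) * (1 - p + p * Real.exp u)
      = Real.exp (-(p * u) + Real.log (1 - p + p * Real.exp u)) := by
        rw [Real.exp_add, Real.exp_log (hφpos u)]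
    _ ≤ Real.exp (u ^ 2 / 8) := Real.exp_le_exp.mpr hlog


/-- Hoeffding's lemma: mgf bound for a centered bounded random variable. -/
lemma mgf_le_hoeffding {Ω : Type*} [MeasurableSpace Ω] {Q : Measure Ω} [IsProbabilityMeasure Q]
    {Z : Ω → ℝ} (hZ : Measurable Z) {a b : ℝ} (hmem : ∀ ω, Z ω ∈ Set.Icc a b)
    (hmean : ∫ ω, Z ω ∂Q = 0) (lam : ℝ) :
    mgf Z Q lam ≤ Real.exp (lam ^ 2 * (b - a) ^ 2 / 8) := by
  have hZint : Integrable Z Q := by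
    refine Integrable.mono' (integrable_const (max |a| |b|)) hZ.aestronglyMeasurable ?_
    filter_upwards with ω
    exact abs_le_max_abs_abs (hmem ω).1 (hmem ω).2
  have ha0 : a ≤ 0 := by
    have : ∫ _ω, a ∂Q ≤ ∫ ω, Z ω ∂Q :=
      integral_mono (integrable_const a) hZint fun ω => (hmem ω).1
    simpa [hmean] using this
  have hb0 : 0 ≤ b := by
    have : ∫ ω, Z ω ∂Q ≤ ∫ _ω, b ∂Q :=
      integral_mono hZint (integrable_const b) fun ω => (hmem ω).2
    simpa [hmean] using this
  rcases eq_or_lt_of_le (ha0.trans hb0) with hab | hab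
  · -- a = b = 0, so Z ≡ 0
    have ha : a = 0 := le_antisymm ha0 (hab ▸ hb0)
    have hZ0 : ∀ ω, Z ω = 0 := fun ω =>
      le_antisymm ((hmem ω).2.trans (hab ▸ ha.le)) (ha ▸ (hmem ω).1)
    have : mgf Z Q lam = 1 := by
      simp only [mgf]
      have : (fun ω => Real.exp (lam * Z ω)) = fun _ => (1:ℝ) := by
        funext ω; rw [hZ0 ω]; simp
      rw [this, integral_const]
      simp
    rw [this]
    exact Real.one_le_exp (by positivity)
  · have hw : 0 < b - a := sub_pos.mpr hab
    set p : ℝ := -a / (b - a) with hp_def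
    have hp0 : 0 ≤ p := div_nonneg (neg_nonneg.mpr ha0) hw.le
    have hp1 : p ≤ 1 := by
      rw [div_le_one hw]; linarith
    set c1 : ℝ := (Real.exp (lam * b) - Real.exp (lam * a)) / (b - a) with hc1_def
    set c0 : ℝ := (b * Real.exp (lam * a) - a * Real.exp (lam * b)) / (b - a) with hc0_def
    have hchord : ∀ ω, Real.exp (lam * Z ω) ≤ c0 + Z ω * c1 := by
      intro ω
      set z := Z ω with hz_def
      have hz1 : a ≤ z := (hmem ω).1
      have hz2 : z ≤ b := (hmem ω).2
      set θ : ℝ := (z - a) / (b - a) with hθ_def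
      have hθ0 : 0 ≤ θ := div_nonneg (by linarith) hw.le
      have hθ1 : θ ≤ 1 := by rw [div_le_one hw]; linarith
      have hconv := convexOn_exp.2 (Set.mem_univ (lam * a)) (Set.mem_univ (lam * b))
        (by linarith : 0 ≤ 1 - θ) hθ0 (by ring)
      have harg : (1 - θ) • (lam * a) + θ • (lam * b) = lam * z := by
        simp only [smul_eq_mul, hθ_def]
        field_simp
        ring
      rw [harg] at hconv
      have heq : (1 - θ) • Real.exp (lam * a) + θ • Real.exp (lam * b) = c0 + z * c1 := by
        simp only [smul_eq_mul, hθ_def, hc0_def, hc1_def]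
        field_simp
        ring
      calc Real.exp (lam * z) ≤ _ := hconv
      _ = c0 + z * c1 := heq
    have hexpint : Integrable (fun ω => Real.exp (lam * Z ω)) Q := by
      refine Integrable.mono' (integrable_const (Real.exp (max (lam * a) (lam * b))))
        (hZ.const_mul lam).exp.aestronglyMeasurable ?_
      filter_upwards with ω
      rw [Real.norm_eq_abs, abs_of_pos (Real.exp_pos _)]
      apply Real.exp_le_exp.mpr
      rcases le_total 0 lam with hl | hl
      · exact le_max_of_le_right (mul_le_mul_of_nonneg_left (hmem ω).2 hl)
      · exact le_max_of_le_left (by nlinarith [(hmem ω).1])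
    have hint_rhs : Integrable (fun ω => c0 + Z ω * c1) Q :=
      (integrable_const c0).add (hZint.mul_const c1)
    have hmgf_le : mgf Z Q lam ≤ c0 := by
      have h1 : mgf Z Q lam ≤ ∫ ω, (c0 + Z ω * c1) ∂Q :=
        integral_mono hexpint hint_rhs hchord
    -- compute the integral
      have h2 : ∫ ω, (c0 + Z ω * c1) ∂Q = c0 := by
        rw [integral_add (integrable_const c0) (hZint.mul_const c1), integral_const,
          integral_mul_const, hmean]
        simp
      rwa [h2] at h1
    -- now bound c0 using hoeff_core
    have hkey : c0 ≤ Real.exp (lam ^ 2 * (b - a) ^ 2 / 8) := by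
      have heq : c0 = Real.exp (-(p * (lam * (b - a)))) *
          (1 - p + p * Real.exp (lam * (b - a))) := by
        rw [hc0_def, hp_def]
        have h1 : Real.exp (lam * a) = Real.exp (-(-a / (b - a) * (lam * (b - a)))) := by
          congr 1
          field_simp
        have h2 : Real.exp (lam * b) =
            Real.exp (-(-a / (b - a) * (lam * (b - a)))) * Real.exp (lam * (b - a)) := by
          rw [← Real.exp_add]
          congr 1
          field_simp
          ring
        rw [h1, h2]
        field_simp
        ring
      rw [heq]
      calc _ ≤ Real.exp ((lam * (b - a)) ^ 2 / 8) := hoeff_core hp0 hp1 _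
      _ = _ := by congr 1; ring
    exact hmgf_le.trans hkey


section HoeffSec
variable {Ω : Type*} [MeasurableSpace Ω] {Q : Measure Ω} [IsProbabilityMeasure Q]

/-- One-sided Hoeffding inequality for sums of iid-type bounded variables. -/
lemma hoeff_onesided {f : ℕ → Ω → ℝ} (hmeas : ∀ i, Measurable (f i))
    (hind : iIndepFun f Q) {a b : ℝ}
    (hmem : ∀ i ω, f i ω ∈ Set.Icc a b) (hw : 0 < b - a) {t : ℝ} (ht : 0 < t) (n : ℕ) :
    Q {ω | (n : ℝ) * t ≤ ∑ i ∈ Finset.range n, (f i ω - ∫ ω', f i ω' ∂Q)} ≤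
      ENNReal.ofReal (Real.exp (-2 * n * t ^ 2 / (b - a) ^ 2)) := by
  set μi : ℕ → ℝ := fun i => ∫ ω', f i ω' ∂Q with hμi_def
  set Y : ℕ → Ω → ℝ := fun i ω => f i ω - μi i with hY_def
  have hfint : ∀ i, Integrable (f i) Q := by
    intro i
    refine Integrable.mono' (integrable_const (max |a| |b|)) (hmeas i).aestronglyMeasurable ?_
    filter_upwards with ω
    exact abs_le_max_abs_abs (hmem i ω).1 (hmem i ω).2
  have hYmeas : ∀ i, Measurable (Y i) := fun i => (hmeas i).sub_const (μi i)
  have hYind : iIndepFun Y Q := by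
    have := hind.comp (fun i => (· - μi i)) (fun i => measurable_id.sub_const (μi i))
    exact this
  have hμmem : ∀ i, μi i ∈ Set.Icc a b := by
    intro i
    constructor
    · have : ∫ _ω, a ∂Q ≤ μi i := integral_mono (integrable_const a) (hfint i)
        fun ω => (hmem i ω).1
      simpa using this
    · have : μi i ≤ ∫ _ω, b ∂Q := integral_mono (hfint i) (integrable_const b)
        fun ω => (hmem i ω).2
      simpa using this
  have hYmem : ∀ i ω, Y i ω ∈ Set.Icc (a - μi i) (b - μi i) := by
    intro i ω
    have h1 := (hmem i ω).1
    have h2 := (hmem i ω).2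
    exact ⟨by simp only [hY_def]; linarith, by simp only [hY_def]; linarith⟩
  have hYmean : ∀ i, ∫ ω, Y i ω ∂Q = 0 := by
    intro i
    simp only [hY_def]
    rw [integral_sub (hfint i) (integrable_const (μi i)), integral_const]
    simp [hμi_def]
  set lam : ℝ := 4 * t / (b - a) ^ 2 with hlam_def
  have hlam_pos : 0 < lam := by positivity
  have hYmgf : ∀ i, mgf (Y i) Q lam ≤ Real.exp (lam ^ 2 * (b - a) ^ 2 / 8) := by
    intro i
    have := mgf_le_hoeffding (hYmeas i) (hYmem i) (hYmean i) lam
    calc mgf (Y i) Q lam ≤ Real.exp (lam ^ 2 * ((b - μi i) - (a - μi i)) ^ 2 / 8) := this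
    _ = Real.exp (lam ^ 2 * (b - a) ^ 2 / 8) := by congr 1; ring
  -- integrability of exp of each
  have hYexpint : ∀ i, Integrable (fun ω => Real.exp (lam * Y i ω)) Q := by
    intro i
    refine Integrable.mono' (integrable_const (Real.exp (lam * (b - μi i))))
      ((hYmeas i).const_mul lam).exp.aestronglyMeasurable ?_
    filter_upwards with ω
    rw [Real.norm_eq_abs, abs_of_pos (Real.exp_pos _)]
    exact Real.exp_le_exp.mpr (mul_le_mul_of_nonneg_left (hYmem i ω).2 hlam_pos.le)
  have hexpsumint : Integrable (fun ω => Real.exp (lam * (∑ i ∈ Finset.range n, Y i) ω)) Q :=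
    hYind.integrable_exp_mul_sum hYmeas fun i _ => hYexpint i
  have hmgfsum : mgf (∑ i ∈ Finset.range n, Y i) Q lam ≤ Real.exp (n * (lam ^ 2 * (b - a) ^ 2 / 8)) := by
    rw [hYind.mgf_sum hYmeas (Finset.range n)]
    calc ∏ i ∈ Finset.range n, mgf (Y i) Q lam
        ≤ ∏ _i ∈ Finset.range n, Real.exp (lam ^ 2 * (b - a) ^ 2 / 8) :=
          Finset.prod_le_prod (fun i _ => mgf_nonneg) (fun i _ => hYmgf i)
    _ = Real.exp (n * (lam ^ 2 * (b - a) ^ 2 / 8)) := by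
        rw [Finset.prod_const, Finset.card_range, ← Real.exp_nat_mul]
  have hcher := measure_ge_le_exp_mul_mgf (X := ∑ i ∈ Finset.range n, Y i) (μ := Q)
    ((n : ℝ) * t) hlam_pos.le hexpsumint
  have hfinal : (Q {ω | (n : ℝ) * t ≤ (∑ i ∈ Finset.range n, Y i) ω}).toReal ≤
      Real.exp (-2 * n * t ^ 2 / (b - a) ^ 2) := by
    refine hcher.trans ?_
    calc Real.exp (-lam * ((n : ℝ) * t)) * mgf (∑ i ∈ Finset.range n, Y i) Q lam
        ≤ Real.exp (-lam * ((n : ℝ) * t)) * Real.exp (n * (lam ^ 2 * (b - a) ^ 2 / 8)) := by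
          exact mul_le_mul_of_nonneg_left hmgfsum (Real.exp_pos _).le
    _ = Real.exp (-lam * ((n : ℝ) * t) + n * (lam ^ 2 * (b - a) ^ 2 / 8)) := (Real.exp_add _ _).symm
    _ = Real.exp (-2 * n * t ^ 2 / (b - a) ^ 2) := by
        congr 1
        have hne : (b - a) ≠ 0 := hw.ne'
        rw [hlam_def]
        field_simp
        ring
  have hset : {ω | (n : ℝ) * t ≤ ∑ i ∈ Finset.range n, (f i ω - ∫ ω', f i ω' ∂Q)} =
      {ω | (n : ℝ) * t ≤ (∑ i ∈ Finset.range n, Y i) ω} := by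
    ext ω
    simp [hY_def, Finset.sum_apply, hμi_def]
  rw [hset]
  rw [← ENNReal.ofReal_toReal (measure_ne_top Q _)]
  exact ENNReal.ofReal_le_ofReal hfinal

/-- Two-sided Hoeffding inequality for the empirical average. -/
lemma hoeff_avg {f : ℕ → Ω → ℝ} (hmeas : ∀ i, Measurable (f i))
    (hind : iIndepFun f Q) {a b : ℝ}
    (hmem : ∀ i ω, f i ω ∈ Set.Icc a b) (hw : 0 < b - a) {t : ℝ} (ht : 0 < t)
    {m : ℝ} (hm : ∀ i, ∫ ω', f i ω' ∂Q = m) {n : ℕ} (hn : 1 ≤ n) :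
    Q {ω | t ≤ |(n : ℝ)⁻¹ * ∑ i ∈ Finset.range n, f i ω - m|} ≤
      ENNReal.ofReal (2 * Real.exp (-2 * n * t ^ 2 / (b - a) ^ 2)) := by
  have hnpos : (0:ℝ) < n := by exact_mod_cast hn
  set g : ℕ → Ω → ℝ := fun i ω => -(f i ω) with hg_def
  have hgmeas : ∀ i, Measurable (g i) := fun i => (hmeas i).neg
  have hgind : iIndepFun g Q := by
    have := hind.comp (fun _ => (Neg.neg : ℝ → ℝ)) (fun _ => measurable_neg)
    exact this
  have hgmem : ∀ i ω, g i ω ∈ Set.Icc (-b) (-a) := fun i ω =>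
    ⟨neg_le_neg (hmem i ω).2, neg_le_neg (hmem i ω).1⟩
  have hgw : 0 < -a - -b := by linarith
  have hsub : {ω | t ≤ |(n : ℝ)⁻¹ * ∑ i ∈ Finset.range n, f i ω - m|} ⊆
      {ω | (n : ℝ) * t ≤ ∑ i ∈ Finset.range n, (f i ω - ∫ ω', f i ω' ∂Q)} ∪
      {ω | (n : ℝ) * t ≤ ∑ i ∈ Finset.range n, (g i ω - ∫ ω', g i ω' ∂Q)} := by
    intro ω hω
    simp only [Set.mem_setOf_eq] at hω
    have hsum1 : ∑ i ∈ Finset.range n, (f i ω - ∫ ω', f i ω' ∂Q) =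
        (∑ i ∈ Finset.range n, f i ω) - n * m := by
      rw [Finset.sum_sub_distrib]
      congr 1
      simp [hm, Finset.sum_const, Finset.card_range]
    have hsum2 : ∑ i ∈ Finset.range n, (g i ω - ∫ ω', g i ω' ∂Q) =
        -((∑ i ∈ Finset.range n, f i ω) - n * m) := by
      have hgint : ∀ i, ∫ ω', g i ω' ∂Q = -m := by
        intro i
        simp only [hg_def]
        rw [integral_neg, hm i]
      rw [Finset.sum_sub_distrib]
      simp only [hg_def, hgint]
      rw [Finset.sum_neg_distrib]
      simp [Finset.sum_const, Finset.card_range, integral_neg, hm]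
      ring
    have habs : (n : ℝ) * t ≤ |(∑ i ∈ Finset.range n, f i ω) - n * m| := by
      have : |(∑ i ∈ Finset.range n, f i ω) - n * m| =
          (n : ℝ) * |(n : ℝ)⁻¹ * ∑ i ∈ Finset.range n, f i ω - m| := by
        rw [← abs_of_pos hnpos, ← abs_mul]
        congr 1
        field_simp
        rw [abs_of_pos hnpos]
        ring
      rw [this]
      exact mul_le_mul_of_nonneg_left hω hnpos.le
    rcases abs_cases ((∑ i ∈ Finset.range n, f i ω) - n * m) with ⟨heq, _⟩ | ⟨heq, _⟩
    · left
      simp only [Set.mem_setOf_eq, hsum1]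
      linarith [habs, heq]
    · right
      simp only [Set.mem_setOf_eq, hsum2]
      linarith [habs, heq]
  calc Q _ ≤ Q ({ω | (n : ℝ) * t ≤ ∑ i ∈ Finset.range n, (f i ω - ∫ ω', f i ω' ∂Q)} ∪
      {ω | (n : ℝ) * t ≤ ∑ i ∈ Finset.range n, (g i ω - ∫ ω', g i ω' ∂Q)}) := measure_mono hsub
  _ ≤ Q {ω | (n : ℝ) * t ≤ ∑ i ∈ Finset.range n, (f i ω - ∫ ω', f i ω' ∂Q)} +
      Q {ω | (n : ℝ) * t ≤ ∑ i ∈ Finset.range n, (g i ω - ∫ ω', g i ω' ∂Q)} := measure_union_le _ _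
  _ ≤ ENNReal.ofReal (Real.exp (-2 * n * t ^ 2 / (b - a) ^ 2)) +
      ENNReal.ofReal (Real.exp (-2 * n * t ^ 2 / (-a - -b) ^ 2)) := by
        gcongr
        · exact hoeff_onesided hmeas hind hmem hw ht n
        · exact hoeff_onesided hgmeas hgind hgmem hgw ht n
  _ = ENNReal.ofReal (2 * Real.exp (-2 * n * t ^ 2 / (b - a) ^ 2)) := by
      have : (-a - -b) ^ 2 = (b - a) ^ 2 := by ring
      rw [this, ← ENNReal.ofReal_add (Real.exp_pos _).le (Real.exp_pos _).le]
      congr 1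
      ring

end HoeffSec

section KernelLemmas

variable {K : ℝ → ℝ} {h K0 K1 : ℝ}

lemma kh_cont (hK : ContDiff ℝ 3 K) : Continuous (Kh K h) :=
  hK.continuous.comp (continuous_id.div_const h)

lemma kh_diff (hK : ContDiff ℝ 3 K) : Differentiable ℝ (Kh K h) :=
  (hK.differentiable (by norm_num)).comp (differentiable_id.div_const h)

/-- `t ↦ Kh(t²)` is `2K1`-Lipschitz on nonnegative reals. -/
lemma kh_sq_lip (hK : ContDiff ℝ 3 K)
    (hb1 : ∀ t : ℝ, 0 ≤ t → |deriv (Kh K h) (t ^ 2) * t| ≤ K1) :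
    ∀ s r : ℝ, 0 ≤ s → 0 ≤ r →
      |Kh K h (s ^ 2) - Kh K h (r ^ 2)| ≤ 2 * K1 * |s - r| := by
  intro s r hs hr
  set F : ℝ → ℝ := fun v => Kh K h (v ^ 2) with hF_def
  have hder : ∀ v : ℝ, HasDerivAt F (deriv (Kh K h) (v ^ 2) * (2 * v)) v := by
    intro v
    have h1 : HasDerivAt (fun x : ℝ => x ^ 2) (2 * v) v := by
      simpa using hasDerivAt_pow 2 v
    have h2 : HasDerivAt (Kh K h) (deriv (Kh K h) (v ^ 2))
        ((fun x : ℝ => x ^ 2) v) := (kh_diff hK _).hasDerivAt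
    have h3 := HasDerivAt.comp (h₂ := Kh K h) (h := fun x : ℝ => x ^ 2) (x := v) h2 h1
    exact h3
  have key := Convex.norm_image_sub_le_of_norm_hasDerivWithin_le
    (f := F) (f' := fun v => deriv (Kh K h) (v ^ 2) * (2 * v)) (s := Set.Ici (0:ℝ))
    (C := 2 * K1)
    (fun v _ => (hder v).hasDerivWithinAt) ?_ (convex_Ici 0) (Set.mem_Ici.mpr hr)
    (Set.mem_Ici.mpr hs)
  · simpa [Real.norm_eq_abs] using key
  · intro v hv
    have := hb1 v (Set.mem_Ici.mp hv)
    rw [Real.norm_eq_abs]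
    calc |deriv (Kh K h) (v ^ 2) * (2 * v)| = 2 * |deriv (Kh K h) (v ^ 2) * v| := by
          rw [show deriv (Kh K h) (v ^ 2) * (2 * v) = 2 * (deriv (Kh K h) (v ^ 2) * v) by ring,
            abs_mul]
          norm_num
    _ ≤ 2 * K1 := by linarith
end KernelLemmas


section L2Lemmas

variable [mL2 : MeasurableSpace L2] [BorelSpace L2]
variable {K : ℝ → ℝ} {h K0 K1 : ℝ}

/-- The evaluation function `u ↦ K_h(‖u - y‖²)`. -/
def Gk (K : ℝ → ℝ) (h : ℝ) (y : L2) : L2 → ℝ := fun u => Kh K h (‖u - y‖ ^ 2)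

lemma Gk_cont (hK : ContDiff ℝ 3 K) (y : L2) : Continuous (Gk K h y) :=
  (kh_cont hK).comp ((continuous_id.sub continuous_const).norm.pow 2)

lemma Gk_meas (hK : ContDiff ℝ 3 K) (y : L2) : Measurable (Gk K h y) :=
  (Gk_cont hK y).measurable

lemma Gk_mem (hh : 0 < h) (hnn : ∀ t : ℝ, 0 ≤ t → 0 ≤ K t)
    (hb0 : ∀ t : ℝ, 0 ≤ t → |Kh K h (t ^ 2)| ≤ K0) (y u : L2) :
    Gk K h y u ∈ Set.Icc 0 K0 := by
  constructor
  · exact hnn _ (by positivity)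
  · exact (abs_le.mp (hb0 ‖u - y‖ (norm_nonneg _))).2

lemma Gk_lip (hK : ContDiff ℝ 3 K)
    (hb1 : ∀ t : ℝ, 0 ≤ t → |deriv (Kh K h) (t ^ 2) * t| ≤ K1) (y z u : L2) :
    |Gk K h y u - Gk K h z u| ≤ 2 * K1 * ‖y - z‖ := by
  have h1 := kh_sq_lip hK hb1 ‖u - y‖ ‖u - z‖ (norm_nonneg _) (norm_nonneg _)
  refine h1.trans ?_
  have hK1nn : 0 ≤ K1 := le_trans (abs_nonneg _) (hb1 0 le_rfl)
  have h2 : |‖u - y‖ - ‖u - z‖| ≤ ‖y - z‖ := by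
    calc |‖u - y‖ - ‖u - z‖| ≤ ‖(u - y) - (u - z)‖ := abs_norm_sub_norm_le (u - y) (u - z)
    _ = ‖y - z‖ := by rw [show (u - y) - (u - z) = z - y by abel, norm_sub_rev]
  exact mul_le_mul_of_nonneg_left h2 (by linarith)

end L2Lemmas

section EmpConc

variable {Ω : Type*} [MeasurableSpace Ω] {P : Measure Ω} [IsProbabilityMeasure P]
variable {Ω' : Type*} [MeasurableSpace Ω'] {Q : Measure Ω'} [IsProbabilityMeasure Q]
variable [mL2 : MeasurableSpace L2] [BorelSpace L2]

/-- Concentration of the empirical mean of `G ∘ Xᵢ` around `E_P[G(X)]`. -/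
lemma emp_conc {X : Ω → L2} {Xs : ℕ → Ω' → L2} (hXmeas : Measurable X)
    (hXsmeas : ∀ i, Measurable (Xs i))
    (hiid : iIndepFun (m := fun _ : ℕ => mL2) Xs Q)
    (hdist : ∀ i, Measure.map (Xs i) Q = Measure.map X P)
    (G : L2 → ℝ) (hG : Measurable G) {a b : ℝ} (hmem : ∀ u, G u ∈ Set.Icc a b)
    (hw : 0 < b - a) {t : ℝ} (ht : 0 < t) {n : ℕ} (hn : 1 ≤ n) :
    Q {ω' | t ≤ |(n : ℝ)⁻¹ * ∑ i ∈ Finset.range n, G (Xs i ω') - ∫ ω, G (X ω) ∂P|} ≤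
      ENNReal.ofReal (2 * Real.exp (-2 * n * t ^ 2 / (b - a) ^ 2)) := by
  have hmeasf : ∀ i, Measurable (fun ω' => G (Xs i ω')) := fun i => hG.comp (hXsmeas i)
  have hind : iIndepFun (fun i ω' => G (Xs i ω')) Q := by
    have := hiid.comp (fun _ => G) (fun _ => hG)
    exact this
  have hm : ∀ i, ∫ ω', G (Xs i ω') ∂Q = ∫ ω, G (X ω) ∂P := by
    intro i
    rw [← integral_map (hXsmeas i).aemeasurable hG.aestronglyMeasurable, hdist i,
      integral_map hXmeas.aemeasurable hG.aestronglyMeasurable]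
  exact hoeff_avg hmeasf hind (fun i ω' => hmem (Xs i ω')) hw ht hm hn

end EmpConc

set_option maxHeartbeats 1000000 in
/-- Lemma 12 of the paper. Under (H1), (H2), (H3), for i.i.d. samples
`X₁,…,X_n ∼ P` and for all sufficiently small `ε > 0` and every `M > 0`,
`P(sup_{x ∈ B_{H¹₀}(0,M)} |p̂_h(x) − p_h(x)| ≥ ε) ≤ C exp(−32nε²/(25K₀²) + 10MK₁/ε)`,
where `C` is the absolute constant with `N_ε ≤ C exp(M/ε)` for the `L²` covering numbers
of the `H¹₀` ball of radius `M`. -/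
theorem statement17
    {Ω : Type*} [MeasurableSpace Ω] (P : Measure Ω) [IsProbabilityMeasure P]
    {Ω' : Type*} [MeasurableSpace Ω'] (Q : Measure Ω') [IsProbabilityMeasure Q]
    [mL2 : MeasurableSpace L2] [BorelSpace L2]
    (X X' : Ω → L2) (K : ℝ → ℝ) (h K0 K1 K2 K3 M1 N1 : ℝ) (hh : 0 < h)
    (hH1 : AssumpH1 K h K0 K1 K2 K3)
    (hH2 : AssumpH2 K)
    (hXmeas : Measurable X) (hX'meas : AEStronglyMeasurable X' P)
    (hXH10 : ∀ᵐ ω ∂P, IsWeakDeriv (X' ω) (X ω))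
    (hXint : Integrable (fun ω => ‖X ω‖) P) (hX'int : Integrable (fun ω => ‖X' ω‖) P)
    (hM1 : (∫ ω, ‖X ω‖ ∂P) ≤ M1) (hN1 : (∫ ω, ‖X' ω‖ ∂P) ≤ N1)
    -- the i.i.d. sample:
    (Xs : ℕ → Ω' → L2) (hXsmeas : ∀ i, Measurable (Xs i))
    (hiid : iIndepFun (m := fun _ : ℕ => mL2) Xs Q)
    (hdist : ∀ i, Measure.map (Xs i) Q = Measure.map X P)
    -- the absolute covering-number constant:
    (C : ℝ) (hC : 0 < C)
    (hcover : ∀ M ε : ℝ, 0 < M → 0 < ε → ∃ s : Finset L2,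
      (s.card : ℝ) ≤ C * Real.exp (M / ε) ∧
      ∀ x x' : L2, IsWeakDeriv x' x → ‖x'‖ ≤ M → ∃ y ∈ s, ‖x - y‖ ≤ ε) :
    ∀ M : ℝ, 0 < M → ∃ ε₀ > (0:ℝ), ∀ ε : ℝ, 0 < ε → ε ≤ ε₀ → ∀ n : ℕ,
      Q {ω' : Ω' | ε ≤ ⨆ z : {x : L2 // ∃ x' : L2, IsWeakDeriv x' x ∧ ‖x'‖ ≤ M},
          |empPseudoDensity Xs K h n ω' z.1 - pseudoDensity P X K h z.1|}
        ≤ ENNReal.ofReal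
            (C * Real.exp (-(32 * n * ε ^ 2) / (25 * K0 ^ 2) + 10 * M * K1 / ε)) := by
  intro M hM
  classical
  -- Basic positivity facts
  have hK0nn : 0 ≤ K0 := le_trans (abs_nonneg _) (hH1.bound0 0 le_rfl)
  have hK1nn : 0 ≤ K1 := le_trans (abs_nonneg _) (hH1.bound1 0 le_rfl)
  -- the zero function is in H¹₀
  have hwd0 : IsWeakDeriv (0 : L2) 0 := by
    have h0 : (⇑(0 : L2)) =ᵐ[μ01] 0 := Lp.coeFn_zero ℝ 2 μ01
    have hmem : ∀ᵐ t ∂μ01, t ∈ Set.Icc (0:ℝ) 1 := by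
      rw [show μ01 = volume.restrict (Set.Icc (0:ℝ) 1) from rfl]
      exact ae_restrict_mem measurableSet_Icc
    filter_upwards [h0, hmem] with t ht0 htmem
    have hsub : Set.Ioc (0:ℝ) t ⊆ Set.Icc (0:ℝ) 1 :=
      fun s hs => ⟨le_of_lt hs.1, hs.2.trans htmem.2⟩
    have hae : (⇑(0 : L2)) =ᵐ[volume.restrict (Set.Ioc (0:ℝ) t)] 0 :=
      ae_restrict_of_ae_restrict_of_subset hsub h0
    rw [integral_congr_ae hae]
    simpa using ht0
  -- the covering constant is at least 1
  have hC1 : (1:ℝ) ≤ C := by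
    have key : ∀ j : ℕ, (1:ℝ) ≤ C * Real.exp (1 / ((j : ℝ) + 1)) := by
      intro j
      obtain ⟨s, hcard, hcov⟩ := hcover 1 ((j : ℝ) + 1) one_pos (by positivity)
      obtain ⟨y, hy, -⟩ := hcov 0 0 hwd0 (by simp)
      have h1 : (1:ℝ) ≤ s.card := by
        exact_mod_cast Finset.card_pos.mpr ⟨y, hy⟩
      exact h1.trans hcard
    have hlim : Filter.Tendsto (fun j : ℕ => C * Real.exp (1 / ((j : ℝ) + 1))) Filter.atTop
        (nhds (C * Real.exp 0)) := by
      apply Filter.Tendsto.const_mul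
      have := (Real.continuous_exp.continuousAt (x := (0:ℝ))).tendsto.comp
        tendsto_one_div_add_atTop_nhds_zero_nat
      exact this
    have := ge_of_tendsto hlim (Filter.Eventually.of_forall key)
    simpa using this
  have hlogC : 0 ≤ Real.log C := Real.log_nonneg hC1
  haveI hne : Nonempty {x : L2 // ∃ x' : L2, IsWeakDeriv x' x ∧ ‖x'‖ ≤ M} :=
    ⟨⟨0, 0, hwd0, by simpa using hM.le⟩⟩
  -- choice of ε₀
  refine ⟨if 0 < K1 ∧ 0 < K0 then min (K0 / 30) (M * K1 / 10) else 1, ?_, ?_⟩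
  · split_ifs with hKK
    · exact lt_min (div_pos hKK.2 (by norm_num)) (div_pos (mul_pos hM hKK.1) (by norm_num))
    · norm_num
  intro ε hε hεle n
  set E : ℝ := -(32 * n * ε ^ 2) / (25 * K0 ^ 2) + 10 * M * K1 / ε with hE_def
  by_cases htriv : 1 ≤ C * Real.exp E
  · exact le_trans prob_le_one (ENNReal.one_le_ofReal.mpr htriv)
  push_neg at htriv
  -- In the nontrivial case, log C + E < 0
  have hhard : Real.log C + E < 0 := by
    have h1 : Real.log (C * Real.exp E) < Real.log 1 :=
      Real.log_lt_log (by positivity) (by simpa using htriv)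
    rwa [Real.log_mul (ne_of_gt hC) (Real.exp_ne_zero E), Real.log_exp, Real.log_one] at h1
  -- degenerate case: K0 = 0
  by_cases hK0z : K0 = 0
  · have hGzero : ∀ (y u : L2), Kh K h (‖u - y‖ ^ 2) = 0 := by
      intro y u
      have := hH1.bound0 ‖u - y‖ (norm_nonneg _)
      rw [hK0z] at this
      linarith [abs_nonneg (Kh K h (‖u - y‖ ^ 2)), le_abs_self (Kh K h (‖u - y‖ ^ 2)),
        neg_abs_le (Kh K h (‖u - y‖ ^ 2))]
    have hempty : {ω' : Ω' | ε ≤ ⨆ z : {x : L2 // ∃ x' : L2, IsWeakDeriv x' x ∧ ‖x'‖ ≤ M},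
        |empPseudoDensity Xs K h n ω' z.1 - pseudoDensity P X K h z.1|} = ∅ := by
      ext ω'
      simp only [Set.mem_setOf_eq, Set.mem_empty_iff_false, iff_false, not_le]
      have hsup : (⨆ z : {x : L2 // ∃ x' : L2, IsWeakDeriv x' x ∧ ‖x'‖ ≤ M},
          |empPseudoDensity Xs K h n ω' z.1 - pseudoDensity P X K h z.1|) ≤ 0 := by
        apply ciSup_le
        intro z
        have h1 : empPseudoDensity Xs K h n ω' z.1 = 0 := by
          simp [empPseudoDensity, hGzero]
        have h2 : pseudoDensity P X K h z.1 = 0 := by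
          simp [pseudoDensity, hGzero]
        simp [h1, h2]
      linarith
    rw [hempty]
    simp
  have hK0 : 0 < K0 := lt_of_le_of_ne hK0nn (Ne.symm hK0z)
  -- degenerate case: K1 = 0
  by_cases hK1z : K1 = 0
  · have hn1 : 1 ≤ n := by
      by_contra hn
      push_neg at hn
      interval_cases n
      apply absurd htriv
      push_neg
      simp only [hE_def, hK1z, Nat.cast_zero] at *
      calc (1:ℝ) ≤ C := hC1
      _ ≤ C * Real.exp (-(32 * 0 * ε ^ 2) / (25 * K0 ^ 2) + 10 * M * 0 / ε) := by
          rw [show -(32 * 0 * ε ^ 2) / (25 * K0 ^ 2) + 10 * M * 0 / ε = 0 by ring]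
          simp
    have hGconst : ∀ (y u : L2), Kh K h (‖u - y‖ ^ 2) = Kh K h 0 := by
      intro y u
      have := kh_sq_lip hH1.contDiff hH1.bound1 ‖u - y‖ 0 (norm_nonneg _) le_rfl
      rw [hK1z] at this
      simp only [mul_zero, zero_mul] at this
      have h2 : |Kh K h (‖u - y‖ ^ 2) - Kh K h (0 ^ 2)| ≤ 0 := by linarith
      have h3 : Kh K h (‖u - y‖ ^ 2) = Kh K h (0 ^ 2) := by
        have := abs_nonneg (Kh K h (‖u - y‖ ^ 2) - Kh K h (0 ^ 2))
        have h4 : Kh K h (‖u - y‖ ^ 2) - Kh K h (0 ^ 2) = 0 := by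
          rw [← abs_eq_zero]; linarith
        linarith
      rw [h3]; norm_num
    have hempty : {ω' : Ω' | ε ≤ ⨆ z : {x : L2 // ∃ x' : L2, IsWeakDeriv x' x ∧ ‖x'‖ ≤ M},
        |empPseudoDensity Xs K h n ω' z.1 - pseudoDensity P X K h z.1|} = ∅ := by
      ext ω'
      simp only [Set.mem_setOf_eq, Set.mem_empty_iff_false, iff_false, not_le]
      have hsup : (⨆ z : {x : L2 // ∃ x' : L2, IsWeakDeriv x' x ∧ ‖x'‖ ≤ M},
          |empPseudoDensity Xs K h n ω' z.1 - pseudoDensity P X K h z.1|) ≤ 0 := by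
        apply ciSup_le
        intro z
        have hnne : (n:ℝ) ≠ 0 := by positivity
        have h1 : empPseudoDensity Xs K h n ω' z.1 = Kh K h 0 := by
          simp only [empPseudoDensity, hGconst, Finset.sum_const, Finset.card_range,
            nsmul_eq_mul]
          field_simp
        have h2 : pseudoDensity P X K h z.1 = Kh K h 0 := by
          simp [pseudoDensity, hGconst]
        simp [h1, h2]
      linarith
    rw [hempty]
    simp
  have hK1 : 0 < K1 := lt_of_le_of_ne hK1nn (Ne.symm hK1z)
  rw [if_pos ⟨hK1, hK0⟩] at hεle
  have hεK0 : ε ≤ K0 / 30 := hεle.trans (min_le_left _ _)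
  have hεMK1 : ε ≤ M * K1 / 10 := hεle.trans (min_le_right _ _)
  have hK1ne : K1 ≠ 0 := ne_of_gt hK1
  have hK0ne : K0 ≠ 0 := ne_of_gt hK0
  have hεne : ε ≠ 0 := ne_of_gt hε
  -- n ≥ 1
  have hn1 : 1 ≤ n := by
    by_contra hn
    push_neg at hn
    interval_cases n
    have hE0 : E = 10 * M * K1 / ε := by
      rw [hE_def, Nat.cast_zero, show -(32 * 0 * ε ^ 2) = (0:ℝ) by ring, zero_div, zero_add]
    rw [hE0] at hhard
    have hpos : 0 < 10 * M * K1 / ε := by positivity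
    linarith
  have hnR : (1:ℝ) ≤ n := by exact_mod_cast hn1
  -- abbreviations
  set A : ℝ := M * K1 / ε with hA_def
  set B : ℝ := n * ε ^ 2 / K0 ^ 2 with hB_def
  have hA10 : 10 ≤ A := by
    rw [hA_def, le_div_iff₀ hε]
    linarith
  have hB900 : 900 * B ≤ n := by
    have h30 : 30 * ε ≤ K0 := by linarith
    have hn0 : (0:ℝ) ≤ n := Nat.cast_nonneg n
    have hK0sq : (0:ℝ) < K0 ^ 2 := by positivity
    have hstep : 900 * B = 900 * n * ε ^ 2 / K0 ^ 2 := by rw [hB_def]; ring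
    rw [hstep, div_le_iff₀ hK0sq]
    have h900 : 900 * ε ^ 2 ≤ K0 ^ 2 := by nlinarith
    nlinarith [mul_le_mul_of_nonneg_left h900 hn0]
  have hEeq : E = -(32/25) * B + 10 * A := by
    rw [hE_def, hA_def, hB_def]
    field_simp
  have hhard' : Real.log C + 10 * A < (32/25) * B := by
    rw [hEeq] at hhard
    linarith
  -- radii and thresholds
  set r₁ : ℝ := ε / (12 * K1) with hr₁_def
  set r₂ : ℝ := ε / (80 * K1) with hr₂_def
  have hr₁ : 0 < r₁ := by rw [hr₁_def]; positivity
  have hr₂ : 0 < r₂ := by rw [hr₂_def]; positivity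
  set t₁ : ℝ := 89/100 * ε with ht₁_def
  set t₂ : ℝ := 5/100 * ε with ht₂_def
  set c₂ : ℝ := 2 * K1 * (r₁ + r₂) with hc₂_def
  have hc₂pos : 0 < c₂ := by rw [hc₂_def]; positivity
  obtain ⟨s₁, hs₁card, hs₁cov⟩ := hcover M r₁ hM hr₁
  obtain ⟨s₂, hs₂card, hs₂cov⟩ := hcover M r₂ hM hr₂
  -- difference function and events
  set D : L2 → Ω' → ℝ := fun y ω' =>
    empPseudoDensity Xs K h n ω' y - pseudoDensity P X K h y with hD_def
  set A1 : L2 → Set Ω' := fun y => {ω' | t₁ ≤ |D y ω'|} with hA1_def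
  set A2 : L2 × L2 → Set Ω' := fun q =>
    {ω' | ‖q.1 - q.2‖ ≤ r₁ + r₂ ∧ t₂ ≤ |D q.1 ω' - D q.2 ω'|} with hA2_def
  -- integrability
  have hGint : ∀ y : L2, Integrable (fun ω => Gk K h y (X ω)) P := by
    intro y
    refine Integrable.mono' (integrable_const K0)
      ((Gk_meas hH1.contDiff y).comp hXmeas).aestronglyMeasurable ?_
    filter_upwards with ω
    rw [Real.norm_eq_abs, abs_of_nonneg (Gk_mem hh hH1.nonneg hH1.bound0 y (X ω)).1]
    exact (Gk_mem hh hH1.nonneg hH1.bound0 y (X ω)).2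
  -- Lipschitz bounds
  have hpdlip : ∀ y z : L2, |pseudoDensity P X K h y - pseudoDensity P X K h z|
      ≤ 2 * K1 * ‖y - z‖ := by
    intro y z
    have heq : pseudoDensity P X K h y - pseudoDensity P X K h z =
        ∫ ω, (Gk K h y (X ω) - Gk K h z (X ω)) ∂P := by
      rw [integral_sub (hGint y) (hGint z)]
      rfl
    rw [heq, ← Real.norm_eq_abs]
    have hb := norm_integral_le_of_norm_le_const (μ := P)
      (f := fun ω => Gk K h y (X ω) - Gk K h z (X ω)) (C := 2 * K1 * ‖y - z‖) ?_
    · simpa using hb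
    · filter_upwards with ω
      rw [Real.norm_eq_abs]
      exact Gk_lip hH1.contDiff hH1.bound1 y z (X ω)
  have hemplip : ∀ (y z : L2) (ω' : Ω'),
      |empPseudoDensity Xs K h n ω' y - empPseudoDensity Xs K h n ω' z|
        ≤ 2 * K1 * ‖y - z‖ := by
    intro y z ω'
    have heq : empPseudoDensity Xs K h n ω' y - empPseudoDensity Xs K h n ω' z =
        (n:ℝ)⁻¹ * ∑ i ∈ Finset.range n, (Gk K h y (Xs i ω') - Gk K h z (Xs i ω')) := by
      simp only [empPseudoDensity, Gk, Finset.sum_sub_distrib, mul_sub]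
    rw [heq, abs_mul, abs_inv, Nat.abs_cast]
    have hnpos : (0:ℝ) < n := by exact_mod_cast hn1
    calc ((n:ℝ))⁻¹ * |∑ i ∈ Finset.range n, (Gk K h y (Xs i ω') - Gk K h z (Xs i ω'))|
        ≤ (n:ℝ)⁻¹ * ∑ i ∈ Finset.range n, |Gk K h y (Xs i ω') - Gk K h z (Xs i ω')| := by
          gcongr
          exact Finset.abs_sum_le_sum_abs _ _
    _ ≤ (n:ℝ)⁻¹ * ∑ _i ∈ Finset.range n, 2 * K1 * ‖y - z‖ := by
          gcongr with i hi
          exact Gk_lip hH1.contDiff hH1.bound1 y z (Xs i ω')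
    _ = (n:ℝ)⁻¹ * ((n:ℝ) * (2 * K1 * ‖y - z‖)) := by
          rw [Finset.sum_const, Finset.card_range, nsmul_eq_mul]
    _ = 2 * K1 * ‖y - z‖ := by field_simp
  have hDlip : ∀ (y z : L2) (ω' : Ω'), |D y ω' - D z ω'| ≤ 4 * K1 * ‖y - z‖ := by
    intro y z ω'
    have e1 : D y ω' - D z ω' =
        (empPseudoDensity Xs K h n ω' y - empPseudoDensity Xs K h n ω' z) -
        (pseudoDensity P X K h y - pseudoDensity P X K h z) := by
      simp only [hD_def]
      ring
    rw [e1]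
    calc |(empPseudoDensity Xs K h n ω' y - empPseudoDensity Xs K h n ω' z) -
        (pseudoDensity P X K h y - pseudoDensity P X K h z)|
        ≤ |empPseudoDensity Xs K h n ω' y - empPseudoDensity Xs K h n ω' z| +
          |pseudoDensity P X K h y - pseudoDensity P X K h z| := abs_sub _ _
    _ ≤ 2 * K1 * ‖y - z‖ + 2 * K1 * ‖y - z‖ := add_le_add (hemplip y z ω') (hpdlip y z)
    _ = 4 * K1 * ‖y - z‖ := by ring
  -- event inclusion
  have hsub : {ω' : Ω' | ε ≤ ⨆ z : {x : L2 // ∃ x' : L2, IsWeakDeriv x' x ∧ ‖x'‖ ≤ M},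
      |empPseudoDensity Xs K h n ω' z.1 - pseudoDensity P X K h z.1|} ⊆
      (⋃ y ∈ s₁, A1 y) ∪ (⋃ q ∈ s₁ ×ˢ s₂, A2 q) := by
    intro ω' hω'
    by_contra hno
    simp only [Set.mem_union, Set.mem_iUnion, not_or, not_exists] at hno
    obtain ⟨hno1, hno2⟩ := hno
    have hbound : ∀ z : {x : L2 // ∃ x' : L2, IsWeakDeriv x' x ∧ ‖x'‖ ≤ M},
        |empPseudoDensity Xs K h n ω' z.1 - pseudoDensity P X K h z.1| ≤ 99/100 * ε := by
      rintro ⟨x, x', hx'wd, hx'M⟩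
      obtain ⟨y, hy₁, hxy⟩ := hs₁cov x x' hx'wd hx'M
      obtain ⟨z₂, hz₂, hxz₂⟩ := hs₂cov x x' hx'wd hx'M
      have hdyz : ‖y - z₂‖ ≤ r₁ + r₂ := by
        calc ‖y - z₂‖ = ‖(y - x) + (x - z₂)‖ := by rw [show (y - x) + (x - z₂) = y - z₂ by abel]
        _ ≤ ‖y - x‖ + ‖x - z₂‖ := norm_add_le _ _
        _ ≤ r₁ + r₂ := by rw [norm_sub_rev]; exact add_le_add hxy hxz₂
      have h1 : |D y ω'| < t₁ := by
        by_contra hcon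
        push_neg at hcon
        exact hno1 y hy₁ (by rw [hA1_def]; exact hcon)
      have h2 : |D y ω' - D z₂ ω'| < t₂ := by
        by_contra hcon
        push_neg at hcon
        exact hno2 (y, z₂) (Finset.mem_product.mpr ⟨hy₁, hz₂⟩)
          (by rw [hA2_def]; exact ⟨hdyz, hcon⟩)
      have h3 : |D x ω' - D z₂ ω'| ≤ 4 * K1 * r₂ := by
        calc |D x ω' - D z₂ ω'| ≤ 4 * K1 * ‖x - z₂‖ := hDlip x z₂ ω'
        _ ≤ 4 * K1 * r₂ := by gcongr
      have hxd : |D x ω'| ≤ 4 * K1 * r₂ + t₂ + t₁ := by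
        have habs : D x ω' = (D x ω' - D z₂ ω') + (D z₂ ω' - D y ω') + D y ω' := by ring
        calc |D x ω'| = |(D x ω' - D z₂ ω') + (D z₂ ω' - D y ω') + D y ω'| := by rw [← habs]
        _ ≤ |D x ω' - D z₂ ω'| + |D z₂ ω' - D y ω'| + |D y ω'| := abs_add_three _ _ _
        _ ≤ 4 * K1 * r₂ + t₂ + t₁ := by
            rw [abs_sub_comm (D z₂ ω') (D y ω')]
            exact add_le_add (add_le_add h3 h2.le) h1.le
      have hval : 4 * K1 * r₂ = 1/20 * ε := by
        rw [hr₂_def]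
        field_simp
        ring
      have hDx : |empPseudoDensity Xs K h n ω' x - pseudoDensity P X K h x| = |D x ω'| := by
        rw [hD_def]
      calc |empPseudoDensity Xs K h n ω' x - pseudoDensity P X K h x| = |D x ω'| := hDx
      _ ≤ 4 * K1 * r₂ + t₂ + t₁ := hxd
      _ = 99/100 * ε := by rw [hval, ht₂_def, ht₁_def]; ring
    have hsup := ciSup_le hbound
    have hcon : ε ≤ 99/100 * ε := le_trans hω' hsup
    linarith
  -- probability of the individual events
  have hQ1 : ∀ y ∈ s₁, Q (A1 y) ≤ ENNReal.ofReal (2 * Real.exp (-(7921/5000) * B)) := by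
    intro y _
    have hb := emp_conc (P := P) (Q := Q) hXmeas hXsmeas hiid hdist (Gk K h y)
      (Gk_meas hH1.contDiff y) (Gk_mem hh hH1.nonneg hH1.bound0 y)
      (by rw [sub_zero]; exact hK0) (t := t₁) (by rw [ht₁_def]; positivity) hn1
    have hexp : -2 * (n:ℝ) * t₁ ^ 2 / (K0 - 0) ^ 2 = -(7921/5000) * B := by
      rw [ht₁_def, hB_def, sub_zero]
      field_simp
      ring
    rw [hexp] at hb
    have hset : A1 y = {ω' | t₁ ≤ |(n : ℝ)⁻¹ * ∑ i ∈ Finset.range n, Gk K h y (Xs i ω')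
        - ∫ ω, Gk K h y (X ω) ∂P|} := by
      rw [hA1_def, hD_def]
      rfl
    rw [hset]
    exact hb
  have hQ2 : ∀ q ∈ s₁ ×ˢ s₂, Q (A2 q) ≤ ENNReal.ofReal (2 * Real.exp (-(18/529) * n)) := by
    rintro ⟨y, z⟩ _
    by_cases hd : ‖y - z‖ ≤ r₁ + r₂
    · have hGd_meas : Measurable (fun u => Gk K h y u - Gk K h z u) :=
        (Gk_meas hH1.contDiff y).sub (Gk_meas hH1.contDiff z)
      have hGd_mem : ∀ u, (Gk K h y u - Gk K h z u) ∈ Set.Icc (-c₂) c₂ := by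
        intro u
        have hle : 2 * K1 * ‖y - z‖ ≤ c₂ := by
          rw [hc₂_def]
          gcongr
        exact abs_le.mp ((Gk_lip hH1.contDiff hH1.bound1 y z u).trans hle)
      have hb := emp_conc (P := P) (Q := Q) hXmeas hXsmeas hiid hdist _
        hGd_meas hGd_mem (by linarith : (0:ℝ) < c₂ - -c₂) (t := t₂)
        (by rw [ht₂_def]; positivity) hn1
      have hexp : -2 * (n:ℝ) * t₂ ^ 2 / (c₂ - -c₂) ^ 2 = -(18/529) * n := by
        rw [ht₂_def, hc₂_def, hr₁_def, hr₂_def]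
        field_simp
        ring
      rw [hexp] at hb
      have hsplit : ∀ ω' : Ω', D y ω' - D z ω' =
          (n:ℝ)⁻¹ * ∑ i ∈ Finset.range n, (Gk K h y (Xs i ω') - Gk K h z (Xs i ω'))
          - ∫ ω, (Gk K h y (X ω) - Gk K h z (X ω)) ∂P := by
        intro ω'
        rw [integral_sub (hGint y) (hGint z)]
        simp only [hD_def, empPseudoDensity, pseudoDensity, Gk, Finset.sum_sub_distrib, mul_sub]
        ring
      have hsubset : A2 (y, z) ⊆ {ω' | t₂ ≤ |(n : ℝ)⁻¹ *
          ∑ i ∈ Finset.range n, (Gk K h y (Xs i ω') - Gk K h z (Xs i ω'))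
          - ∫ ω, (Gk K h y (X ω) - Gk K h z (X ω)) ∂P|} := by
        intro ω' hω'
        rw [hA2_def] at hω'
        have h2 := hω'.2
        rw [Set.mem_setOf_eq, ← hsplit ω']
        exact h2
      exact (measure_mono hsubset).trans hb
    · have hemp : A2 (y, z) = ∅ := by
        rw [hA2_def]
        ext ω'
        simp only [Set.mem_setOf_eq, Set.mem_empty_iff_false, iff_false, not_and]
        intro hcon
        exact absurd hcon hd
      rw [hemp]
      simp
  -- union bound
  have hQS : Q {ω' : Ω' | ε ≤ ⨆ z : {x : L2 // ∃ x' : L2, IsWeakDeriv x' x ∧ ‖x'‖ ≤ M},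
      |empPseudoDensity Xs K h n ω' z.1 - pseudoDensity P X K h z.1|} ≤
      (s₁.card : ℝ≥0∞) * ENNReal.ofReal (2 * Real.exp (-(7921/5000) * B)) +
      (s₁.card : ℝ≥0∞) * (s₂.card : ℝ≥0∞) * ENNReal.ofReal (2 * Real.exp (-(18/529) * n)) := by
    calc Q _ ≤ Q ((⋃ y ∈ s₁, A1 y) ∪ (⋃ q ∈ s₁ ×ˢ s₂, A2 q)) := measure_mono hsub
    _ ≤ Q (⋃ y ∈ s₁, A1 y) + Q (⋃ q ∈ s₁ ×ˢ s₂, A2 q) := measure_union_le _ _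
    _ ≤ (∑ y ∈ s₁, Q (A1 y)) + ∑ q ∈ s₁ ×ˢ s₂, Q (A2 q) :=
        add_le_add (measure_biUnion_finset_le _ _) (measure_biUnion_finset_le _ _)
    _ ≤ (s₁.card : ℝ≥0∞) * ENNReal.ofReal (2 * Real.exp (-(7921/5000) * B)) +
        ((s₁ ×ˢ s₂).card : ℝ≥0∞) * ENNReal.ofReal (2 * Real.exp (-(18/529) * n)) := by
        apply add_le_add
        · calc ∑ y ∈ s₁, Q (A1 y)
              ≤ s₁.card • ENNReal.ofReal (2 * Real.exp (-(7921/5000) * B)) :=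
                Finset.sum_le_card_nsmul _ _ _ hQ1
          _ = _ := by rw [nsmul_eq_mul]
        · calc ∑ q ∈ s₁ ×ˢ s₂, Q (A2 q)
              ≤ (s₁ ×ˢ s₂).card • ENNReal.ofReal (2 * Real.exp (-(18/529) * n)) :=
                Finset.sum_le_card_nsmul _ _ _ hQ2
          _ = _ := by rw [nsmul_eq_mul]
    _ = _ := by rw [Finset.card_product]; push_cast; ring
  refine hQS.trans ?_
  -- final real computation
  have hM12 : M / r₁ = 12 * A := by rw [hr₁_def, hA_def]; field_simp
  have hM80 : M / r₂ = 80 * A := by rw [hr₂_def, hA_def]; field_simp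
  rw [hM12] at hs₁card
  rw [hM80] at hs₂card
  have hT1 : (s₁.card : ℝ) * (2 * Real.exp (-(7921/5000) * B)) ≤ 1/2 * (C * Real.exp E) := by
    have hz : 3 ≤ E - (12 * A + -(7921/5000) * B) := by
      rw [hEeq]
      linarith
    have h4 : (4:ℝ) ≤ Real.exp (E - (12 * A + -(7921/5000) * B)) := by
      have := Real.add_one_le_exp (E - (12 * A + -(7921/5000) * B))
      linarith
    calc (s₁.card : ℝ) * (2 * Real.exp (-(7921/5000) * B))
        ≤ C * Real.exp (12 * A) * (2 * Real.exp (-(7921/5000) * B)) :=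
          mul_le_mul_of_nonneg_right hs₁card (by positivity)
    _ = 1/2 * (C * (Real.exp (12 * A + -(7921/5000) * B) * 4)) := by
          rw [Real.exp_add]; ring
    _ ≤ 1/2 * (C * (Real.exp (12 * A + -(7921/5000) * B) *
          Real.exp (E - (12 * A + -(7921/5000) * B)))) := by
          have := mul_le_mul_of_nonneg_left h4 (Real.exp_pos (12 * A + -(7921/5000) * B)).le
          nlinarith [Real.exp_pos (12 * A + -(7921/5000) * B), hC.le]
    _ = 1/2 * (C * Real.exp E) := by
          rw [← Real.exp_add, show (12 * A + -(7921/5000) * B) +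
            (E - (12 * A + -(7921/5000) * B)) = E by ring]
  have hT2 : ((s₁.card : ℝ) * (s₂.card : ℝ)) * (2 * Real.exp (-(18/529) * n)) ≤
      1/2 * (C * Real.exp E) := by
    have hz : Real.log (4 * C) ≤ E - (92 * A + -(18/529) * n) := by
      have hlog4 : Real.log (4 * C) ≤ 3 + Real.log C := by
        rw [Real.log_mul (by norm_num) (ne_of_gt hC)]
        have hl4 : Real.log 4 ≤ 3 := by
          have := Real.log_le_sub_one_of_pos (by norm_num : (0:ℝ) < 4)
          linarith
        linarith
      refine hlog4.trans ?_
      rw [hEeq]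
      linarith
    have h4C : (4 * C : ℝ) ≤ Real.exp (E - (92 * A + -(18/529) * n)) := by
      calc (4 * C : ℝ) = Real.exp (Real.log (4 * C)) := (Real.exp_log (by positivity)).symm
      _ ≤ _ := Real.exp_le_exp.mpr hz
    calc ((s₁.card : ℝ) * (s₂.card : ℝ)) * (2 * Real.exp (-(18/529) * n))
        ≤ (C * Real.exp (12 * A)) * (C * Real.exp (80 * A)) * (2 * Real.exp (-(18/529) * n)) := by
          apply mul_le_mul_of_nonneg_right _ (by positivity)
          exact mul_le_mul hs₁card hs₂card (Nat.cast_nonneg _) (by positivity)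
    _ = 1/2 * (Real.exp (92 * A + -(18/529) * n) * (4 * C) * C) := by
          rw [show 92 * A + -(18/529) * (n:ℝ) = (12 * A + 80 * A) + -(18/529) * n by ring,
            Real.exp_add, Real.exp_add]
          ring
    _ ≤ 1/2 * (Real.exp (92 * A + -(18/529) * n) *
          Real.exp (E - (92 * A + -(18/529) * n)) * C) := by
          have h5 := mul_le_mul_of_nonneg_left h4C (Real.exp_pos (92 * A + -(18/529) * (n:ℝ))).le
          nlinarith [hC.le, Real.exp_pos (92 * A + -(18/529) * (n:ℝ))]
    _ = 1/2 * (C * Real.exp E) := by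
          rw [← Real.exp_add, show (92 * A + -(18/529) * (n:ℝ)) +
            (E - (92 * A + -(18/529) * n)) = E by ring]
          ring
  have hreal : (s₁.card : ℝ) * (2 * Real.exp (-(7921/5000) * B)) +
      (s₁.card : ℝ) * (s₂.card : ℝ) * (2 * Real.exp (-(18/529) * n)) ≤ C * Real.exp E := by
    calc _ ≤ 1/2 * (C * Real.exp E) + 1/2 * (C * Real.exp E) := add_le_add hT1 hT2
    _ = C * Real.exp E := by ring
  have he1 : (s₁.card : ℝ≥0∞) * ENNReal.ofReal (2 * Real.exp (-(7921/5000) * B)) =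
      ENNReal.ofReal ((s₁.card : ℝ) * (2 * Real.exp (-(7921/5000) * B))) := by
    rw [← ENNReal.ofReal_natCast s₁.card, ← ENNReal.ofReal_mul (Nat.cast_nonneg _)]
  have he2 : (s₁.card : ℝ≥0∞) * (s₂.card : ℝ≥0∞) * ENNReal.ofReal
      (2 * Real.exp (-(18/529) * n)) =
      ENNReal.ofReal ((s₁.card : ℝ) * (s₂.card : ℝ) * (2 * Real.exp (-(18/529) * n))) := by
    have hnn0 : (0:ℝ) ≤ (s₁.card : ℝ) * (s₂.card : ℝ) :=
      mul_nonneg (Nat.cast_nonneg _) (Nat.cast_nonneg _)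
    rw [← ENNReal.ofReal_natCast s₁.card, ← ENNReal.ofReal_natCast s₂.card,
      ← ENNReal.ofReal_mul (Nat.cast_nonneg _), ← ENNReal.ofReal_mul hnn0]
  have hnn1 : (0:ℝ) ≤ (s₁.card : ℝ) * (2 * Real.exp (-(7921/5000) * B)) :=
    mul_nonneg (Nat.cast_nonneg _) (mul_nonneg (by norm_num) (Real.exp_pos _).le)
  have hnn2 : (0:ℝ) ≤ (s₁.card : ℝ) * (s₂.card : ℝ) * (2 * Real.exp (-(18/529) * n)) :=
    mul_nonneg (mul_nonneg (Nat.cast_nonneg _) (Nat.cast_nonneg _))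
      (mul_nonneg (by norm_num) (Real.exp_pos _).le)
  rw [he1, he2, ← ENNReal.ofReal_add hnn1 hnn2]
  exact ENNReal.ofReal_le_ofReal hreal

end
end
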